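/- arXiv:2406.14340 — 4 statements merged into one kernel-verified Lean document; each statement's English description precedes it below -/
import Mathlib

section
/- Let d ∈ ℕ, 𝔠 ∈ (0,∞), let 𝔩(θ,ϑ) = (𝔠/2)‖θ − ϑ‖² for θ,ϑ ∈ ℝ^d, let γ ∈ (0, 2/𝔠), let (Ω,𝓕,ℙ) be a probability space, let X_{n,m} : Ω → ℝ^d, (n,m) ∈ ℤ², be i.i.d. random variables with sup_{n,m∈ℤ} ‖X_{n,m}(ω)‖ < ∞ for every ω ∈ Ω, let M, 𝔐 ∈ ℕ, let Θ : ℕ₀ × Ω → ℝ^d satisfy Θ_n = Θ_{n−1} − (γ/M) Σ_{m=1}^M (∇_θ 𝔩)(Θ_{n−1}, X_{n,m}) for all n ∈ ℕ, and assume that (X_{n,m})_{(n,m)∈ℤ²} and Θ₀ are independent. Let χ : Ω → ℝ^d satisfy χ = Σ_{n=0}^∞ (𝔠γ(1−𝔠γ)^n/M) Σ_{m=1}^M X_{−n,m}, and assume ℙ( ‖(1−𝔠γ)χ + (𝔠γ/M) Σ_{m=1}^M X_{1,m} − (1/𝔐) Σ_{m=1}^𝔐 X_{2,m}‖ > ‖χ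 − (1/𝔐) Σ_{m=1}^𝔐 X_{2,m}‖ ) > 0. Then for every N ∈ ℕ it holds that ℙ( ⋃_{n=N}^∞ { Σ_{m=1}^𝔐 𝔩(Θ_n, X_{n,−m}) > Σ_{m=1}^𝔐 𝔩(Θ_{n−1}, X_{n,−m}) } ) = 1. -/
open MeasureTheory ProbabilityTheory


/-- Reindexing an independent family along an injective map preserves independence. -/
lemma aux_iIndepFun_precomp {Ω ι ι' β : Type*} [MeasurableSpace Ω] {P : Measure Ω}
    [mβ : MeasurableSpace β] {f : ι → Ω → β}
    (hf : iIndepFun f P) (e : ι' → ι) (he : Function.Injective e) :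
    iIndepFun (fun i => f (e i)) P := by
  classical
  rw [iIndepFun_iff_measure_inter_preimage_eq_mul]
  intro S sets hsets
  rcases isEmpty_or_nonempty ι' with hE | hNE
  · have : S = ∅ := Finset.eq_empty_of_isEmpty S
    subst this
    simp [hf.isProbabilityMeasure.measure_univ]
  · have h := hf.measure_inter_preimage_eq_mul (S.image e)
      (sets := fun p => sets (Function.invFun e p))
      (fun p hp => by
        rcases Finset.mem_image.1 hp with ⟨i, hi, rfl⟩
        simpa [Function.leftInverse_invFun he i] using hsets i hi)
    have h1 : (⋂ p ∈ S.image e, f p ⁻¹' sets (Function.invFun e p)) =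
        ⋂ i ∈ S, f (e i) ⁻¹' sets i := by
      rw [← Finset.set_biInter_coe, Finset.coe_image, Set.biInter_image,
        ← Finset.set_biInter_coe]
      exact Set.iInter₂_congr fun i _ => by rw [Function.leftInverse_invFun he]
    have h2 : (∏ p ∈ S.image e, P (f p ⁻¹' sets (Function.invFun e p))) =
        ∏ i ∈ S, P (f (e i) ⁻¹' sets i) := by
      rw [Finset.prod_image (fun i _ j _ h => he h)]
      exact Finset.prod_congr rfl fun i _ => by rw [Function.leftInverse_invFun he]
    rw [h1, h2] at h
    exact h

/-- The joint law of a finite iid family is the product measure. -/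
lemma aux_map_eq_pi {Ω β : Type*} {J : Type*} [Fintype J] [Nonempty J] [MeasurableSpace Ω]
    {P : Measure Ω} [IsProbabilityMeasure P] [MeasurableSpace β]
    (g : J → Ω → β) (hg : ∀ i, Measurable (g i))
    (hindep : iIndepFun g P)
    (ν : Measure β) (hν : ∀ i, P.map (g i) = ν) :
    P.map (fun ω i => g i ω) = Measure.pi (fun _ => ν) := by
  have hνp : IsProbabilityMeasure ν := by
    obtain ⟨i⟩ := ‹Nonempty J›
    rw [← hν i]; exact Measure.isProbabilityMeasure_map (hg i).aemeasurable
  refine (Measure.pi_eq fun s hs => ?_).symm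
  have hF : Measurable (fun ω (i : J) => g i ω) := measurable_pi_lambda _ hg
  rw [Measure.map_apply hF (MeasurableSet.univ_pi hs)]
  have : (fun ω (i : J) => g i ω) ⁻¹' Set.pi Set.univ s = ⋂ i, g i ⁻¹' s i := by
    ext ω; simp [Set.mem_pi]
  rw [this, hindep.meas_iInter (fun i => ⟨s i, hs i, rfl⟩)]
  exact Finset.prod_congr rfl fun i _ => by
    rw [← hν i, Measure.map_apply (hg i) (hs i)]

/-- Product rule for events depending on pairwise disjoint blocks of an independent family. -/
lemma aux_blocks {Ω ι β J : Type*} [MeasurableSpace Ω] {P : Measure Ω}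
    [mβ : MeasurableSpace β] [Fintype J] [DecidableEq ι] {f : ι → Ω → β}
    (hf : iIndepFun f P) (hmeas : ∀ i, Measurable (f i))
    (e : ℕ → J → ι) (hdisj : ∀ j j', j ≠ j' → ∀ a b, e j a ≠ e j' b)
    (C : ℕ → Set (J → β)) (hC : ∀ j, MeasurableSet (C j)) (s : Finset ℕ) :
    P (⋂ j ∈ s, (fun ω i => f (e j i) ω) ⁻¹' C j)
      = ∏ j ∈ s, P ((fun ω i => f (e j i) ω) ⁻¹' C j) := by
  classical
  induction s using Finset.induction_on with
  | empty => simp [hf.isProbabilityMeasure.measure_univ]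
  | @insert j₀ t hj₀ ih =>
    rw [Finset.set_biInter_insert, Finset.prod_insert hj₀, ← ih]
    set S₀ : Finset ι := Finset.image (e j₀) Finset.univ with hS₀
    set T : Finset ι := t.biUnion (fun j => Finset.image (e j) Finset.univ) with hT
    have hST : Disjoint S₀ T := by
      rw [Finset.disjoint_left]
      intro p hp hpT
      rcases Finset.mem_image.1 hp with ⟨a, _, rfl⟩
      rcases Finset.mem_biUnion.1 hpT with ⟨j, hj, hpj⟩
      rcases Finset.mem_image.1 hpj with ⟨b, _, hb⟩
      exact hdisj j j₀ (fun h => hj₀ (h ▸ hj)) b a hb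
    have hIndep := hf.indepFun_finset S₀ T hST hmeas
    have hmem0 : ∀ a : J, e j₀ a ∈ S₀ := fun a =>
      Finset.mem_image.2 ⟨a, Finset.mem_univ a, rfl⟩
    have hmemT : ∀ j, j ∈ t → ∀ a : J, e j a ∈ T := fun j hj a =>
      Finset.mem_biUnion.2 ⟨j, hj, Finset.mem_image.2 ⟨a, Finset.mem_univ a, rfl⟩⟩
    set r₀ : (↥S₀ → β) → (J → β) := fun v i => v ⟨e j₀ i, hmem0 i⟩ with hr₀
    have hr₀m : Measurable r₀ := measurable_pi_lambda _ (fun i => measurable_pi_apply _)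
    have hB₀ : ((fun ω i => f (e j₀ i) ω) ⁻¹' C j₀)
        = (fun ω (i : ↥S₀) => f i ω) ⁻¹' (r₀ ⁻¹' C j₀) := rfl
    set D : Set (↥T → β) := ⋂ j, ⋂ (hj : j ∈ t),
      (fun (v : ↥T → β) i => v ⟨e j i, hmemT j hj i⟩) ⁻¹' C j with hD
    have hDm : MeasurableSet D := by
      refine MeasurableSet.iInter fun j => MeasurableSet.iInter fun hj => ?_
      exact (measurable_pi_lambda _ (fun i => measurable_pi_apply _)) (hC j)
    have hBT : (⋂ j ∈ t, (fun ω i => f (e j i) ω) ⁻¹' C j)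
        = (fun ω (i : ↥T) => f i ω) ⁻¹' D := by
      rw [hD, Set.preimage_iInter₂]
      exact Set.iInter₂_congr fun j hj => rfl
    rw [hB₀, hBT]
    exact indepFun_iff_measure_inter_preimage_eq_mul.mp hIndep _ _
      (hr₀m (hC j₀)) hDm

open RealInnerProductSpace in
/-- The test loss comparison reduces to comparing distances to the sample mean. -/
lemma aux_loss {d : ℕ} (c : ℝ) (hc : 0 < c) (𝔐 : ℕ) (h𝔐 : 0 < 𝔐)
    (Y : ℕ → EuclideanSpace ℝ (Fin d)) (θ θ' : EuclideanSpace ℝ (Fin d))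
    (h : ‖θ - (𝔐 : ℝ)⁻¹ • ∑ m ∈ Finset.range 𝔐, Y m‖
      < ‖θ' - (𝔐 : ℝ)⁻¹ • ∑ m ∈ Finset.range 𝔐, Y m‖) :
    ∑ m ∈ Finset.range 𝔐, (c / 2) * ‖θ - Y m‖ ^ 2
      < ∑ m ∈ Finset.range 𝔐, (c / 2) * ‖θ' - Y m‖ ^ 2 := by
  have h𝔐' : ((𝔐 : ℝ)) ≠ 0 := Nat.cast_ne_zero.2 h𝔐.ne'
  set Ybar : EuclideanSpace ℝ (Fin d) := (𝔐 : ℝ)⁻¹ • ∑ m ∈ Finset.range 𝔐, Y m with hYbar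
  have key : ∀ t : EuclideanSpace ℝ (Fin d),
      ∑ m ∈ Finset.range 𝔐, (c / 2) * ‖t - Y m‖ ^ 2
        = (c * 𝔐 / 2) * ‖t - Ybar‖ ^ 2
          + ((c / 2) * ∑ m ∈ Finset.range 𝔐, ‖Y m‖ ^ 2 - (c * 𝔐 / 2) * ‖Ybar‖ ^ 2) := by
    intro t
    have h3 : ⟪t, Ybar⟫ = (𝔐 : ℝ)⁻¹ * ∑ m ∈ Finset.range 𝔐, ⟪t, Y m⟫ := by
      rw [hYbar, inner_smul_right, inner_sum]
    simp_rw [norm_sub_sq_real]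
    simp only [mul_sub, mul_add]
    rw [Finset.sum_add_distrib, Finset.sum_sub_distrib, Finset.sum_const, Finset.card_range,
      ← Finset.mul_sum, ← Finset.mul_sum, ← Finset.mul_sum, h3, nsmul_eq_mul]
    field_simp
    ring
  rw [key θ, key θ']
  have hsq : ‖θ - Ybar‖ ^ 2 < ‖θ' - Ybar‖ ^ 2 :=
    pow_lt_pow_left₀ h (norm_nonneg _) two_ne_zero
  have hc𝔐 : 0 < c * 𝔐 / 2 := by positivity
  nlinarith [hsq, hc𝔐]


/-- Perturbation stability of the gap event. -/
lemma aux_perturb {d : ℕ} (ρ : ℝ) (hρ : |ρ| ≤ 1) (t t' a y : EuclideanSpace ℝ (Fin d))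
    (η δ' : ℝ) (hη : ‖t' - t‖ ≤ η)
    (h : ‖ρ • t + a - y‖ > ‖t - y‖ + δ') :
    ‖ρ • t' + a - y‖ > ‖t' - y‖ + δ' - 2 * η := by
  have h1 : ‖ρ • t + a - y‖ - ‖ρ • t' + a - y‖ ≤ ‖ρ • (t - t')‖ := by
    have := norm_sub_norm_le (ρ • t + a - y) (ρ • t' + a - y)
    have heq : (ρ • t + a - y) - (ρ • t' + a - y) = ρ • (t - t') := by
      rw [smul_sub]; abel
    rw [heq] at this; exact this
  have h2 : ‖ρ • (t - t')‖ ≤ η := by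
    rw [norm_smul]
    calc |ρ| * ‖t - t'‖ ≤ 1 * ‖t - t'‖ := by
          apply mul_le_mul_of_nonneg_right hρ (norm_nonneg _)
      _ = ‖t - t'‖ := one_mul _
      _ = ‖t' - t‖ := by rw [norm_sub_rev]
      _ ≤ η := hη
  have h3 : ‖t' - y‖ ≤ ‖t - y‖ + η := by
    calc ‖t' - y‖ = ‖(t - y) + (t' - t)‖ := by congr 1; abel
      _ ≤ ‖t - y‖ + ‖t' - t‖ := norm_add_le _ _
      _ ≤ ‖t - y‖ + η := by linarith
  linarith


/-- Index type for one block of samples. -/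
abbrev auxJ (K M 𝔐 : ℕ) : Type := (Fin (K + 2) × Fin M) ⊕ Fin 𝔐

/-- Coordinates used by the block event at time `n`. -/
def auxE (n : ℤ) (K M 𝔐 : ℕ) : auxJ K M 𝔐 → ℤ × ℤ
  | Sum.inl (k, m) => (n + 1 - ((k : ℕ) : ℤ), ((m : ℕ) : ℤ) + 1)
  | Sum.inr m => (n + 1, -(((m : ℕ) : ℤ) + 1))

/-- Coordinates used by the stationary-one-step event. -/
def auxE' (K M 𝔐 : ℕ) : auxJ K M 𝔐 → ℤ × ℤ
  | Sum.inl (k, m) => (1 - ((k : ℕ) : ℤ), ((m : ℕ) : ℤ) + 1)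
  | Sum.inr m => (2, ((m : ℕ) : ℤ) + 1)

lemma auxE_inj (n : ℤ) (K M 𝔐 : ℕ) : Function.Injective (auxE n K M 𝔐) := by
  intro a b hab
  rcases a with ⟨k, m⟩ | m <;> rcases b with ⟨k', m'⟩ | m' <;>
    simp only [auxE, Prod.mk.injEq] at hab
  · obtain ⟨h1, h2⟩ := hab
    have hk : (k : ℕ) = (k' : ℕ) := by omega
    have hm : (m : ℕ) = (m' : ℕ) := by omega
    simp only [Sum.inl.injEq, Prod.mk.injEq]
    exact ⟨Fin.ext hk, Fin.ext hm⟩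
  · exfalso; omega
  · exfalso; omega
  · obtain ⟨h1, h2⟩ := hab
    have hm : (m : ℕ) = (m' : ℕ) := by omega
    simp only [Sum.inr.injEq]
    exact Fin.ext hm

lemma auxE'_inj (K M 𝔐 : ℕ) : Function.Injective (auxE' K M 𝔐) := by
  intro a b hab
  rcases a with ⟨k, m⟩ | m <;> rcases b with ⟨k', m'⟩ | m' <;>
    simp only [auxE', Prod.mk.injEq] at hab
  · obtain ⟨h1, h2⟩ := hab
    have hk : (k : ℕ) = (k' : ℕ) := by omega
    have hm : (m : ℕ) = (m' : ℕ) := by omega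
    simp only [Sum.inl.injEq, Prod.mk.injEq]
    exact ⟨Fin.ext hk, Fin.ext hm⟩
  · exfalso; omega
  · exfalso; omega
  · obtain ⟨h1, h2⟩ := hab
    have hm : (m : ℕ) = (m' : ℕ) := by omega
    simp only [Sum.inr.injEq]
    exact Fin.ext hm

lemma auxE_fst_bounds (n : ℤ) (K M 𝔐 : ℕ) (i : auxJ K M 𝔐) :
    n - (K : ℤ) ≤ (auxE n K M 𝔐 i).1 ∧ (auxE n K M 𝔐 i).1 ≤ n + 1 := by
  rcases i with ⟨k, m⟩ | m <;> dsimp only [auxE]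
  · have hk : (k : ℕ) < K + 2 := k.isLt
    constructor <;> omega
  · constructor <;> omega

/-- The truncated stationary sum read off from a block of coordinates. -/
noncomputable def auxTr {d : ℕ} (K M 𝔐 : ℕ) (a : ℕ → ℝ)
    (v : auxJ K M 𝔐 → EuclideanSpace ℝ (Fin d)) : EuclideanSpace ℝ (Fin d) :=
  ∑ k : Fin (K + 1), a (k : ℕ) • ((M : ℝ)⁻¹ • ∑ m : Fin M, v (Sum.inl (k.succ, m)))

noncomputable def auxSv {d : ℕ} (K M 𝔐 : ℕ)
    (v : auxJ K M 𝔐 → EuclideanSpace ℝ (Fin d)) : EuclideanSpace ℝ (Fin d) :=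
  (M : ℝ)⁻¹ • ∑ m : Fin M, v (Sum.inl (⟨0, by omega⟩, m))

noncomputable def auxYv {d : ℕ} (K M 𝔐 : ℕ)
    (v : auxJ K M 𝔐 → EuclideanSpace ℝ (Fin d)) : EuclideanSpace ℝ (Fin d) :=
  (𝔐 : ℝ)⁻¹ • ∑ m : Fin 𝔐, v (Sum.inr m)

lemma auxTr_meas {d : ℕ} (K M 𝔐 : ℕ) (a : ℕ → ℝ) :
    Measurable (auxTr (d := d) K M 𝔐 a) := by
  unfold auxTr
  refine Finset.measurable_sum _ fun k _ => Measurable.fun_const_smul ?_ _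
  refine Measurable.fun_const_smul ?_ _
  exact Finset.measurable_sum _ fun m _ => measurable_pi_apply _

lemma auxSv_meas {d : ℕ} (K M 𝔐 : ℕ) : Measurable (auxSv (d := d) K M 𝔐) := by
  unfold auxSv
  refine Measurable.fun_const_smul ?_ _
  exact Finset.measurable_sum _ fun m _ => measurable_pi_apply _

lemma auxYv_meas {d : ℕ} (K M 𝔐 : ℕ) : Measurable (auxYv (d := d) K M 𝔐) := by
  unfold auxYv
  refine Measurable.fun_const_smul ?_ _
  exact Finset.measurable_sum _ fun m _ => measurable_pi_apply _
set_option maxHeartbeats 2000000 in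
/-- **SGD with constant learning rate: the test loss strictly increases infinitely often.**
Let `𝔩(θ,ϑ) = (𝔠/2)‖θ−ϑ‖²`, `γ ∈ (0, 2/𝔠)`, let `X_{n,m} : Ω → ℝ^d`, `(n,m) ∈ ℤ²`, be
i.i.d. random variables with `sup_{n,m}‖X_{n,m}(ω)‖ < ∞` for every `ω`, let `Θ` satisfy the
SGD recursion `Θ_n = Θ_{n−1} − (γ/M) Σ_{m=1}^M (∇_θ 𝔩)(Θ_{n−1}, X_{n,m})` (with
`(∇_θ 𝔩)(θ,x) = 𝔠(θ−x)`), assume `(X_{n,m})` and `Θ₀` independent, let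
`χ = Σ_{n=0}^∞ (𝔠γ(1−𝔠γ)^n/M) Σ_{m=1}^M X_{−n,m}` and assume that one SGD step from the
invariant distribution strictly increases the test loss with positive probability. Then for
every `N ∈ ℕ` it holds that
`ℙ(⋃_{n=N}^∞ {Σ_{m=1}^𝔐 𝔩(Θ_n, X_{n,−m}) > Σ_{m=1}^𝔐 𝔩(Θ_{n−1}, X_{n,−m})}) = 1`. -/
theorem stmt_5 {Ω : Type*} [MeasurableSpace Ω] (P : Measure Ω) [IsProbabilityMeasure P]
    (d : ℕ) (hd : 0 < d) (c : ℝ) (hc : 0 < c)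
    (γ : ℝ) (hγ : γ ∈ Set.Ioo (0 : ℝ) (2 / c))
    (X : ℤ × ℤ → Ω → EuclideanSpace ℝ (Fin d))
    (hmeas : ∀ p, Measurable (X p))
    (hindep : iIndepFun X P)
    (hident : ∀ p q : ℤ × ℤ, IdentDistrib (X p) (X q) P P)
    (hbdd : ∀ ω, ∃ C : ℝ, ∀ p : ℤ × ℤ, ‖X p ω‖ ≤ C)
    (M 𝔐 : ℕ) (hM : 0 < M) (h𝔐 : 0 < 𝔐)
    (Θ : ℕ → Ω → EuclideanSpace ℝ (Fin d)) (hΘmeas : ∀ n, Measurable (Θ n))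
    (hrec : ∀ (n : ℕ) ω, Θ (n + 1) ω = Θ n ω -
      (γ / (M : ℝ)) • ∑ m ∈ Finset.range M, c • (Θ n ω - X ((n : ℤ) + 1, (m : ℤ) + 1) ω))
    (hindep0 : IndepFun (fun ω (p : ℤ × ℤ) => X p ω) (Θ 0) P)
    (χ : Ω → EuclideanSpace ℝ (Fin d))
    (hχ : ∀ ω, HasSum
      (fun n : ℕ => ((c * γ * (1 - c * γ) ^ n) / (M : ℝ)) •
        ∑ m ∈ Finset.range M, X (-(n : ℤ), (m : ℤ) + 1) ω)
      (χ ω))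
    (hpos : 0 < P {ω |
      ‖(1 - c * γ) • χ ω + ((c * γ) / (M : ℝ)) • (∑ m ∈ Finset.range M, X (1, (m : ℤ) + 1) ω)
          - ((1 : ℝ) / (𝔐 : ℝ)) • (∑ m ∈ Finset.range 𝔐, X (2, (m : ℤ) + 1) ω)‖
        > ‖χ ω - ((1 : ℝ) / (𝔐 : ℝ)) • (∑ m ∈ Finset.range 𝔐, X (2, (m : ℤ) + 1) ω)‖})
    (N : ℕ) (hN : 0 < N) :
    P {ω | ∃ n : ℕ, N ≤ n + 1 ∧
      (∑ m ∈ Finset.range 𝔐, (c / 2) * ‖Θ (n + 1) ω - X ((n : ℤ) + 1, -((m : ℤ) + 1)) ω‖ ^ 2)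
        > (∑ m ∈ Finset.range 𝔐, (c / 2) * ‖Θ n ω - X ((n : ℤ) + 1, -((m : ℤ) + 1)) ω‖ ^ 2)}
      = 1 := by
  classical
  obtain ⟨hγ0, hγ2⟩ := hγ
  have hM0 : ((M : ℝ)) ≠ 0 := Nat.cast_ne_zero.2 hM.ne'
  have h𝔐0 : ((𝔐 : ℝ)) ≠ 0 := Nat.cast_ne_zero.2 h𝔐.ne'
  have hcγ : 0 < c * γ := mul_pos hc hγ0
  have hcγ2 : c * γ < 2 := by
    have := (lt_div_iff₀ hc).1 hγ2; linarith
  set ρ : ℝ := 1 - c * γ with hρdef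
  have hρ : |ρ| < 1 := abs_lt.2 ⟨by simp only [hρdef]; linarith, by simp only [hρdef]; linarith⟩
  have hρ0 : (0:ℝ) ≤ |ρ| := abs_nonneg _
  -- batch means
  set S : ℤ → Ω → EuclideanSpace ℝ (Fin d) :=
    fun t ω => (M : ℝ)⁻¹ • ∑ m ∈ Finset.range M, X (t, (m : ℤ) + 1) ω with hSdef
  have hSmeas : ∀ t, Measurable (S t) := fun t =>
    (Finset.measurable_sum _ fun m _ => hmeas _).fun_const_smul _
  -- the recursion in clean form
  have hrec' : ∀ (n : ℕ) ω, Θ (n + 1) ω = ρ • Θ n ω + (c * γ) • S ((n : ℤ) + 1) ω := by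
    intro n ω
    rw [hrec n ω]
    have hsum : ∑ m ∈ Finset.range M, c • (Θ n ω - X ((n : ℤ) + 1, (m : ℤ) + 1) ω)
        = (M : ℝ) • (c • Θ n ω) - c • ∑ m ∈ Finset.range M, X ((n : ℤ) + 1, (m : ℤ) + 1) ω := by
      simp only [smul_sub]
      rw [Finset.sum_sub_distrib, Finset.sum_const, Finset.card_range, Finset.smul_sum,
        ← Nat.cast_smul_eq_nsmul ℝ]
    rw [hsum]
    show _ = ρ • Θ n ω + (c * γ) • ((M : ℝ)⁻¹ • ∑ m ∈ Finset.range M, X ((n : ℤ) + 1, (m : ℤ) + 1) ω)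
    match_scalars <;> field_simp <;> ring
  -- explicit formula
  have hform : ∀ (n : ℕ) ω, Θ n ω = ρ ^ n • Θ 0 ω
      + ∑ k ∈ Finset.range n, (c * γ * ρ ^ k) • S ((n : ℤ) - k) ω := by
    intro n
    induction n with
    | zero => intro ω; simp
    | succ n ih =>
      intro ω
      rw [hrec' n ω, ih ω, Finset.sum_range_succ']
      have hcast : ∀ i : ℕ, (((n : ℕ) + 1 : ℕ) : ℤ) - ((i + 1 : ℕ) : ℤ) = (n : ℤ) - i := by
        intro i; push_cast; ring
      have h1 : ∑ i ∈ Finset.range n, (c * γ * ρ ^ (i + 1)) • S ((((n : ℕ) + 1 : ℕ) : ℤ) - ((i + 1 : ℕ) : ℤ)) ω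
          = ∑ i ∈ Finset.range n, (ρ * (c * γ * ρ ^ i)) • S ((n : ℤ) - i) ω := by
        refine Finset.sum_congr rfl fun i _ => ?_
        rw [hcast i]
        congr 1
        ring
      push_cast at h1 ⊢
      rw [h1]
      rw [smul_add, Finset.smul_sum]
      simp only [smul_smul, pow_zero, mul_one, pow_succ, Nat.cast_ofNat, sub_zero]
      module
  -- bounds
  have hSbound : ∀ ω, ∃ C : ℝ, 0 ≤ C ∧ (∀ t, ‖S t ω‖ ≤ C) ∧ ∀ p, ‖X p ω‖ ≤ C := by
    intro ω
    obtain ⟨C, hC⟩ := hbdd ω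
    refine ⟨max C 0, le_max_right _ _, fun t => ?_, fun p => (hC p).trans (le_max_left _ _)⟩
    have h1 : ‖∑ m ∈ Finset.range M, X (t, (m : ℤ) + 1) ω‖ ≤ (M : ℝ) * max C 0 := by
      calc ‖∑ m ∈ Finset.range M, X (t, (m : ℤ) + 1) ω‖
          ≤ ∑ m ∈ Finset.range M, ‖X (t, (m : ℤ) + 1) ω‖ := norm_sum_le _ _
        _ ≤ ∑ _m ∈ Finset.range M, max C 0 := Finset.sum_le_sum fun m _ =>
            (hC _).trans (le_max_left _ _)
        _ = (M : ℝ) * max C 0 := by rw [Finset.sum_const, Finset.card_range, nsmul_eq_mul]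
    show ‖(M : ℝ)⁻¹ • ∑ m ∈ Finset.range M, X (t, (m : ℤ) + 1) ω‖ ≤ max C 0
    rw [norm_smul, Real.norm_eq_abs, abs_of_nonneg (by positivity)]
    calc (M : ℝ)⁻¹ * ‖∑ m ∈ Finset.range M, X (t, (m : ℤ) + 1) ω‖
        ≤ (M : ℝ)⁻¹ * ((M : ℝ) * max C 0) := by
          apply mul_le_mul_of_nonneg_left h1 (by positivity)
      _ = max C 0 := by field_simp
  -- truncations of χ
  set χK : ℕ → Ω → EuclideanSpace ℝ (Fin d) :=
    fun K ω => ∑ k ∈ Finset.range (K + 1), (c * γ * ρ ^ k) • S (-(k : ℤ)) ω with hχKdef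
  have hχKmeas : ∀ K, Measurable (χK K) := fun K =>
    Finset.measurable_sum _ fun k _ => (hSmeas _).fun_const_smul _
  have hχKt : ∀ ω, Filter.Tendsto (fun K => χK K ω) Filter.atTop (nhds (χ ω)) := by
    intro ω
    have heq : (fun k : ℕ => ((c * γ * ρ ^ k) / (M : ℝ)) •
        ∑ m ∈ Finset.range M, X (-(k : ℤ), (m : ℤ) + 1) ω)
        = fun k : ℕ => (c * γ * ρ ^ k) • S (-(k : ℤ)) ω := by
      funext k
      show _ = (c * γ * ρ ^ k) • ((M : ℝ)⁻¹ • ∑ m ∈ Finset.range M, X (-(k : ℤ), (m : ℤ) + 1) ω)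
      rw [smul_smul, div_eq_mul_inv]
    have h' : HasSum (fun k : ℕ => (c * γ * ρ ^ k) • S (-(k : ℤ)) ω) (χ ω) := heq ▸ hχ ω
    exact h'.tendsto_sum_nat.comp (Filter.tendsto_add_atTop_nat 1)
  have hχmeas : Measurable χ :=
    measurable_of_tendsto_metrizable hχKmeas (tendsto_pi_nhds.2 hχKt)
  -- the target of one fresh test sample average
  set Y : Ω → EuclideanSpace ℝ (Fin d) :=
    fun ω => (𝔐 : ℝ)⁻¹ • ∑ m ∈ Finset.range 𝔐, X (2, (m : ℤ) + 1) ω with hYdef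
  have hYmeas : Measurable Y := (Finset.measurable_sum _ fun m _ => hmeas _).fun_const_smul _
  -- gap events at stationarity
  set D : ℝ → Set Ω := fun η =>
    {ω | ‖ρ • χ ω + (c * γ) • S 1 ω - Y ω‖ > ‖χ ω - Y ω‖ + η} with hDdef
  have hDmeas : ∀ η, MeasurableSet (D η) := by
    intro η
    have hf : Measurable (fun ω => ‖χ ω - Y ω‖ + η) :=
      ((hχmeas.sub hYmeas).norm).add_const η
    have hg : Measurable (fun ω => ‖ρ • χ ω + (c * γ) • S 1 ω - Y ω‖) :=
      (((hχmeas.const_smul ρ).add ((hSmeas 1).const_smul (c * γ))).sub hYmeas).norm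
    exact measurableSet_lt hf hg
  have hD0 : 0 < P (D 0) := by
    suffices h : {ω |
        ‖(1 - c * γ) • χ ω + ((c * γ) / (M : ℝ)) • (∑ m ∈ Finset.range M, X (1, (m : ℤ) + 1) ω)
          - ((1 : ℝ) / (𝔐 : ℝ)) • (∑ m ∈ Finset.range 𝔐, X (2, (m : ℤ) + 1) ω)‖
        > ‖χ ω - ((1 : ℝ) / (𝔐 : ℝ)) • (∑ m ∈ Finset.range 𝔐, X (2, (m : ℤ) + 1) ω)‖} = D 0 by
      rw [← h]; exact hpos
    ext ω
    simp only [Set.mem_setOf_eq]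
    show _ ↔ _ > ‖χ ω - Y ω‖ + 0
    rw [add_zero]
    have e1 : ((c * γ) / (M : ℝ)) • (∑ m ∈ Finset.range M, X (1, (m : ℤ) + 1) ω)
        = (c * γ) • S 1 ω := by
      show _ = (c * γ) • ((M : ℝ)⁻¹ • ∑ m ∈ Finset.range M, X (1, (m : ℤ) + 1) ω)
      rw [smul_smul, div_eq_mul_inv]
    have e2 : ((1 : ℝ) / (𝔐 : ℝ)) • (∑ m ∈ Finset.range 𝔐, X (2, (m : ℤ) + 1) ω) = Y ω := by
      show _ = (𝔐 : ℝ)⁻¹ • ∑ m ∈ Finset.range 𝔐, X (2, (m : ℤ) + 1) ω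
      rw [one_div]
    rw [e1, e2, ← hρdef]
  -- choose the margin δ
  obtain ⟨δ, hδpos, hδ⟩ : ∃ δ : ℝ, 0 < δ ∧ 0 < P (D δ) := by
    have hUnion : D 0 ⊆ ⋃ j : ℕ, D (1 / ((j : ℝ) + 1)) := by
      intro ω hω
      have hω' : ‖χ ω - Y ω‖ + 0 < ‖ρ • χ ω + (c * γ) • S 1 ω - Y ω‖ := hω
      obtain ⟨j, hj⟩ := exists_nat_one_div_lt
        (sub_pos.2 (by linarith : ‖χ ω - Y ω‖ < ‖ρ • χ ω + (c * γ) • S 1 ω - Y ω‖))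
      refine Set.mem_iUnion.2 ⟨j, ?_⟩
      show ‖χ ω - Y ω‖ + 1 / ((j : ℝ) + 1) < ‖ρ • χ ω + (c * γ) • S 1 ω - Y ω‖
      linarith
    by_contra hcon
    push_neg at hcon
    have hz : ∀ j : ℕ, P (D (1 / ((j : ℝ) + 1))) = 0 := fun j =>
      le_antisymm (hcon _ (by positivity)) zero_le
    have : P (D 0) = 0 :=
      measure_mono_null hUnion (measure_iUnion_null hz)
    exact absurd this hD0.ne'
  set ε : ENNReal := P (D δ) with hεdef
  -- truncated gap events
  set D' : ℕ → Set Ω := fun K =>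
    {ω | ‖ρ • χK K ω + (c * γ) • S 1 ω - Y ω‖ > ‖χK K ω - Y ω‖ + δ / 2} with hD'def
  have hD'meas : ∀ K, MeasurableSet (D' K) := by
    intro K
    have hf : Measurable (fun ω => ‖χK K ω - Y ω‖ + δ / 2) :=
      (((hχKmeas K).sub hYmeas).norm).add_const _
    have hg : Measurable (fun ω => ‖ρ • χK K ω + (c * γ) • S 1 ω - Y ω‖) :=
      ((((hχKmeas K).const_smul ρ).add ((hSmeas 1).const_smul (c * γ))).sub hYmeas).norm
    exact measurableSet_lt hf hg
  -- choose K₀ beyond which truncated events have positive probability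
  obtain ⟨K₀, hK₀⟩ : ∃ K₀ : ℕ, ∀ K, K₀ ≤ K → 0 < P (D' K) := by
    have hTiM : TendstoInMeasure P χK Filter.atTop χ :=
      tendstoInMeasure_of_tendsto_ae (fun K => (hχKmeas K).aestronglyMeasurable)
        (Filter.Eventually.of_forall hχKt)
    have hbad := tendstoInMeasure_iff_dist.1 hTiM (δ / 8) (by positivity)
    have hev : ∀ᶠ K in Filter.atTop,
        P {ω | δ / 8 ≤ dist (χK K ω) (χ ω)} < ε := hbad.eventually_lt_const hδ
    obtain ⟨K₀, hK₀'⟩ := Filter.eventually_atTop.1 hev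
    refine ⟨K₀, fun K hK => ?_⟩
    by_contra h0
    push_neg at h0
    have hPD'0 : P (D' K) = 0 := le_antisymm h0 zero_le
    have hsub : D δ ⊆ D' K ∪ {ω | δ / 8 ≤ dist (χK K ω) (χ ω)} := by
      intro ω hω
      by_cases hdist : δ / 8 ≤ dist (χK K ω) (χ ω)
      · exact Or.inr hdist
      · left
        push_neg at hdist
        rw [dist_eq_norm] at hdist
        have hη : ‖χK K ω - χ ω‖ ≤ δ / 8 := hdist.le
        have hgap := aux_perturb ρ hρ.le (χ ω) (χK K ω) ((c * γ) • S 1 ω) (Y ω)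
          (δ / 8) δ hη hω
        show ‖χK K ω - Y ω‖ + δ / 2 < ‖ρ • χK K ω + (c * γ) • S 1 ω - Y ω‖
        have : ‖χK K ω - Y ω‖ + δ - 2 * (δ / 8)
            < ‖ρ • χK K ω + (c * γ) • S 1 ω - Y ω‖ := hgap
        linarith
    have : ε ≤ P (D' K) + P {ω | δ / 8 ≤ dist (χK K ω) (χ ω)} :=
      le_trans (measure_mono hsub) (measure_union_le _ _)
    rw [hPD'0, zero_add] at this
    exact absurd (lt_of_le_of_lt this (hK₀' K hK)) (lt_irrefl _)
  -- block events along the trajectory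
  set Ybar : ℕ → Ω → EuclideanSpace ℝ (Fin d) :=
    fun n ω => (𝔐 : ℝ)⁻¹ • ∑ m ∈ Finset.range 𝔐, X ((n : ℤ) + 1, -((m : ℤ) + 1)) ω with hYbardef
  set trunc : ℕ → ℕ → Ω → EuclideanSpace ℝ (Fin d) :=
    fun K n ω => ∑ k ∈ Finset.range (K + 1), (c * γ * ρ ^ k) • S ((n : ℤ) - k) ω with htruncdef
  set B : ℕ → ℕ → Set Ω := fun K n =>
    {ω | ‖ρ • trunc K n ω + (c * γ) • S ((n : ℤ) + 1) ω - Ybar n ω‖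
      > ‖trunc K n ω - Ybar n ω‖ + δ / 2} with hBdef
  have hYbarmeas : ∀ n, Measurable (Ybar n) := fun n =>
    (Finset.measurable_sum _ fun m _ => hmeas _).fun_const_smul _
  have htruncmeas : ∀ K n, Measurable (trunc K n) := fun K n =>
    Finset.measurable_sum _ fun k _ => (hSmeas _).fun_const_smul _
  have hBmeas : ∀ K n, MeasurableSet (B K n) := by
    intro K n
    have hf : Measurable (fun ω => ‖trunc K n ω - Ybar n ω‖ + δ / 2) :=
      (((htruncmeas K n).sub (hYbarmeas n)).norm).add_const _
    have hg : Measurable (fun ω =>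
        ‖ρ • trunc K n ω + (c * γ) • S ((n : ℤ) + 1) ω - Ybar n ω‖) :=
      ((((htruncmeas K n).const_smul ρ).add ((hSmeas _).const_smul (c * γ))).sub
        (hYbarmeas n)).norm
    exact measurableSet_lt hf hg
  -- the key probabilistic fact
  have key : ∀ K, K₀ ≤ K → ∀ r : ℕ,
      P {ω | ∃ j, r ≤ j ∧ ω ∈ B K ((j + 1) * (K + 2))} = 1 := by
    intro K hKK₀ r
    have hp : 0 < P (D' K) := hK₀ K hKK₀
    haveI : Nonempty (auxJ K M 𝔐) := ⟨Sum.inr ⟨0, h𝔐⟩⟩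
    set a : ℕ → ℝ := fun k => c * γ * ρ ^ k with hadef
    set C : Set (auxJ K M 𝔐 → EuclideanSpace ℝ (Fin d)) :=
      {v | ‖ρ • auxTr K M 𝔐 a v + (c * γ) • auxSv K M 𝔐 v - auxYv K M 𝔐 v‖
        > ‖auxTr K M 𝔐 a v - auxYv K M 𝔐 v‖ + δ / 2} with hCdef
    have hCm : MeasurableSet C := by
      refine measurableSet_lt ?_ ?_
      · exact (((auxTr_meas K M 𝔐 a).sub (auxYv_meas K M 𝔐)).norm).add_const _
      · exact ((((auxTr_meas K M 𝔐 a).const_smul ρ).add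
          ((auxSv_meas K M 𝔐).const_smul (c * γ))).sub (auxYv_meas K M 𝔐)).norm
    -- evaluation of the abstract quantities on block coordinates
    have hTr_eval : ∀ (t : ℤ) ω, auxTr K M 𝔐 a (fun i => X (auxE t K M 𝔐 i) ω)
        = ∑ k ∈ Finset.range (K + 1), (c * γ * ρ ^ k) • S (t - k) ω := by
      intro t ω
      rw [← Fin.sum_univ_eq_sum_range (fun k : ℕ => (c * γ * ρ ^ k) • S (t - k) ω) (K + 1)]
      unfold auxTr
      refine Finset.sum_congr rfl fun k _ => ?_
      show (c * γ * ρ ^ (k : ℕ)) • _ = (c * γ * ρ ^ (k : ℕ)) • S (t - (k : ℕ)) ω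
      congr 1
      show (M : ℝ)⁻¹ • ∑ m : Fin M, X (auxE t K M 𝔐 (Sum.inl (k.succ, m))) ω
        = (M : ℝ)⁻¹ • ∑ m ∈ Finset.range M, X (t - (k : ℕ), (m : ℤ) + 1) ω
      congr 1
      rw [← Fin.sum_univ_eq_sum_range (fun m : ℕ => X (t - (k : ℕ), (m : ℤ) + 1) ω) M]
      refine Finset.sum_congr rfl fun m _ => ?_
      rw [show auxE t K M 𝔐 (Sum.inl (k.succ, m)) = (t - ((k : ℕ) : ℤ), ((m : ℕ) : ℤ) + 1) from by
        simp only [auxE, Fin.val_succ, Prod.mk.injEq, and_true]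
        push_cast; ring]
    have hSv_eval : ∀ (t : ℤ) ω, auxSv K M 𝔐 (fun i => X (auxE t K M 𝔐 i) ω)
        = S (t + 1) ω := by
      intro t ω
      show (M : ℝ)⁻¹ • ∑ m : Fin M, X (auxE t K M 𝔐 (Sum.inl (⟨0, by omega⟩, m))) ω
        = (M : ℝ)⁻¹ • ∑ m ∈ Finset.range M, X (t + 1, (m : ℤ) + 1) ω
      congr 1
      rw [← Fin.sum_univ_eq_sum_range (fun m : ℕ => X (t + 1, (m : ℤ) + 1) ω) M]
      refine Finset.sum_congr rfl fun m _ => ?_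
      rw [show auxE t K M 𝔐 (Sum.inl (⟨0, by omega⟩, m)) = (t + 1, ((m : ℕ) : ℤ) + 1) from by
        simp only [auxE, Prod.mk.injEq, and_true]
        show t + 1 - ((0 : ℕ) : ℤ) = t + 1
        norm_num]
    have hYv_eval : ∀ (t : ℤ) ω, auxYv K M 𝔐 (fun i => X (auxE t K M 𝔐 i) ω)
        = (𝔐 : ℝ)⁻¹ • ∑ m ∈ Finset.range 𝔐, X (t + 1, -((m : ℤ) + 1)) ω := by
      intro t ω
      show (𝔐 : ℝ)⁻¹ • ∑ m : Fin 𝔐, X (auxE t K M 𝔐 (Sum.inr m)) ω = _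
      congr 1
      rw [← Fin.sum_univ_eq_sum_range (fun m : ℕ => X (t + 1, -((m : ℤ) + 1)) ω) 𝔐]
      exact Finset.sum_congr rfl fun m _ => by rfl
    have hTr'_eval : ∀ ω, auxTr K M 𝔐 a (fun i => X (auxE' K M 𝔐 i) ω) = χK K ω := by
      intro ω
      show _ = ∑ k ∈ Finset.range (K + 1), (c * γ * ρ ^ k) • S (-(k : ℤ)) ω
      rw [← Fin.sum_univ_eq_sum_range (fun k : ℕ => (c * γ * ρ ^ k) • S (-(k : ℤ)) ω) (K + 1)]
      unfold auxTr
      refine Finset.sum_congr rfl fun k _ => ?_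
      show (c * γ * ρ ^ (k : ℕ)) • _ = (c * γ * ρ ^ (k : ℕ)) • S (-((k : ℕ) : ℤ)) ω
      congr 1
      show (M : ℝ)⁻¹ • ∑ m : Fin M, X (auxE' K M 𝔐 (Sum.inl (k.succ, m))) ω
        = (M : ℝ)⁻¹ • ∑ m ∈ Finset.range M, X (-((k : ℕ) : ℤ), (m : ℤ) + 1) ω
      congr 1
      rw [← Fin.sum_univ_eq_sum_range (fun m : ℕ => X (-((k : ℕ) : ℤ), (m : ℤ) + 1) ω) M]
      refine Finset.sum_congr rfl fun m _ => ?_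
      rw [show auxE' K M 𝔐 (Sum.inl (k.succ, m)) = (-((k : ℕ) : ℤ), ((m : ℕ) : ℤ) + 1) from by
        simp only [auxE', Fin.val_succ, Prod.mk.injEq, and_true]
        push_cast; ring]
    have hSv'_eval : ∀ ω, auxSv K M 𝔐 (fun i => X (auxE' K M 𝔐 i) ω) = S 1 ω := by
      intro ω
      show (M : ℝ)⁻¹ • ∑ m : Fin M, X (auxE' K M 𝔐 (Sum.inl (⟨0, by omega⟩, m))) ω
        = (M : ℝ)⁻¹ • ∑ m ∈ Finset.range M, X (1, (m : ℤ) + 1) ω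
      congr 1
      rw [← Fin.sum_univ_eq_sum_range (fun m : ℕ => X (1, (m : ℤ) + 1) ω) M]
      refine Finset.sum_congr rfl fun m _ => ?_
      rw [show auxE' K M 𝔐 (Sum.inl (⟨0, by omega⟩, m)) = ((1 : ℤ), ((m : ℕ) : ℤ) + 1) from by
        simp only [auxE', Prod.mk.injEq, and_true]
        show (1 : ℤ) - ((0 : ℕ) : ℤ) = 1
        norm_num]
    have hYv'_eval : ∀ ω, auxYv K M 𝔐 (fun i => X (auxE' K M 𝔐 i) ω) = Y ω := by
      intro ω
      show (𝔐 : ℝ)⁻¹ • ∑ m : Fin 𝔐, X (auxE' K M 𝔐 (Sum.inr m)) ω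
        = (𝔐 : ℝ)⁻¹ • ∑ m ∈ Finset.range 𝔐, X (2, (m : ℤ) + 1) ω
      congr 1
      rw [← Fin.sum_univ_eq_sum_range (fun m : ℕ => X (2, (m : ℤ) + 1) ω) 𝔐]
      exact Finset.sum_congr rfl fun m _ => by rfl
    -- identification of events
    have hB_eq : ∀ n : ℕ, (fun ω (i : auxJ K M 𝔐) => X (auxE (n : ℤ) K M 𝔐 i) ω) ⁻¹' C
        = B K n := by
      intro n
      ext ω
      show (fun i => X (auxE (n : ℤ) K M 𝔐 i) ω) ∈ C ↔ _
      rw [hCdef]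
      simp only [Set.mem_setOf_eq, hTr_eval, hSv_eval, hYv_eval]
      exact Iff.rfl
    have hD'_eq : (fun ω (i : auxJ K M 𝔐) => X (auxE' K M 𝔐 i) ω) ⁻¹' C = D' K := by
      ext ω
      show (fun i => X (auxE' K M 𝔐 i) ω) ∈ C ↔ _
      rw [hCdef]
      simp only [Set.mem_setOf_eq, hTr'_eval, hSv'_eval, hYv'_eval]
      exact Iff.rfl
    -- equal probabilities via the product law
    have hPB : ∀ n : ℕ, P (B K n) = P (D' K) := by
      intro n
      have hXind : iIndepFun
          (fun i => X (auxE (n : ℤ) K M 𝔐 i)) P :=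
        aux_iIndepFun_precomp hindep _ (auxE_inj (n : ℤ) K M 𝔐)
      have hXind' : iIndepFun
          (fun i => X (auxE' K M 𝔐 i)) P :=
        aux_iIndepFun_precomp hindep _ (auxE'_inj K M 𝔐)
      have hlaw : P.map (fun ω (i : auxJ K M 𝔐) => X (auxE (n : ℤ) K M 𝔐 i) ω)
          = Measure.pi (fun _ => P.map (X (0, 0))) :=
        aux_map_eq_pi _ (fun i => hmeas _) hXind _ (fun i => (hident _ (0, 0)).map_eq)
      have hlaw' : P.map (fun ω (i : auxJ K M 𝔐) => X (auxE' K M 𝔐 i) ω)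
          = Measure.pi (fun _ => P.map (X (0, 0))) :=
        aux_map_eq_pi _ (fun i => hmeas _) hXind' _ (fun i => (hident _ (0, 0)).map_eq)
      rw [← hB_eq n, ← hD'_eq,
        ← Measure.map_apply (measurable_pi_lambda _ fun i => hmeas _) hCm,
        ← Measure.map_apply (measurable_pi_lambda _ fun i => hmeas _) hCm,
        hlaw, hlaw']
    -- pairwise disjointness of blocks
    have hblocks : ∀ j j' : ℕ, j ≠ j' → ∀ x y : auxJ K M 𝔐,
        auxE ((((j + 1) * (K + 2) : ℕ)) : ℤ) K M 𝔐 x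
          ≠ auxE ((((j' + 1) * (K + 2) : ℕ)) : ℤ) K M 𝔐 y := by
      have hsep : ∀ u u' : ℕ, u < u' → (u + 1) * (K + 2) + (K + 2) ≤ (u' + 1) * (K + 2) := by
        intro u u' h
        calc (u + 1) * (K + 2) + (K + 2) = (u + 2) * (K + 2) := by ring
          _ ≤ (u' + 1) * (K + 2) := Nat.mul_le_mul_right _ (by omega)
      intro j j' hjj' x y heq
      have h1 := auxE_fst_bounds ((((j + 1) * (K + 2) : ℕ)) : ℤ) K M 𝔐 x
      have h2 := auxE_fst_bounds ((((j' + 1) * (K + 2) : ℕ)) : ℤ) K M 𝔐 y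
      have hfst : (auxE ((((j + 1) * (K + 2) : ℕ)) : ℤ) K M 𝔐 x).1
          = (auxE ((((j' + 1) * (K + 2) : ℕ)) : ℤ) K M 𝔐 y).1 := by rw [heq]
      rcases Nat.lt_or_ge j j' with h | h
      · have hs : ((((j + 1) * (K + 2) : ℕ)) : ℤ) + ((K : ℤ) + 2)
            ≤ (((j' + 1) * (K + 2) : ℕ) : ℤ) := by exact_mod_cast hsep j j' h
        linarith [h1.1, h1.2, h2.1, h2.2]
      · have h' : j' < j := by omega
        have hs : ((((j' + 1) * (K + 2) : ℕ)) : ℤ) + ((K : ℤ) + 2)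
            ≤ (((j + 1) * (K + 2) : ℕ) : ℤ) := by exact_mod_cast hsep j' j h'
        linarith [h1.1, h1.2, h2.1, h2.2]
    -- product rule for complements of block events
    have hprod := aux_blocks hindep hmeas
      (fun j => auxE ((((j + 1) * (K + 2) : ℕ)) : ℤ) K M 𝔐) hblocks
      (fun _ => Cᶜ) (fun _ => hCm.compl)
    have hBc : ∀ j : ℕ,
        ((fun ω (i : auxJ K M 𝔐) => X (auxE ((((j + 1) * (K + 2) : ℕ)) : ℤ) K M 𝔐 i) ω) ⁻¹' Cᶜ)
          = (B K ((j + 1) * (K + 2)))ᶜ := by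
      intro j; rw [Set.preimage_compl, hB_eq]
    have hPBc : ∀ j : ℕ, P ((B K ((j + 1) * (K + 2)))ᶜ) = 1 - P (D' K) := fun j => by
      rw [measure_compl (hBmeas _ _) (measure_ne_top _ _), measure_univ, hPB]
    set T := {ω | ∃ j, r ≤ j ∧ ω ∈ B K ((j + 1) * (K + 2))} with hTdef
    have hTm : MeasurableSet T := by
      have hT : T = ⋃ j, ⋃ (_ : r ≤ j), B K ((j + 1) * (K + 2)) := by
        ext ω; simp [hTdef, Set.mem_iUnion]
      rw [hT]
      exact MeasurableSet.iUnion fun j => MeasurableSet.iUnion fun _ => hBmeas _ _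
    have hTsub : ∀ q : ℕ, Tᶜ ⊆ ⋂ j ∈ Finset.Ico r (r + q), (B K ((j + 1) * (K + 2)))ᶜ := by
      intro q ω hω
      simp only [Set.mem_compl_iff, hTdef, Set.mem_setOf_eq, not_exists, not_and] at hω
      simp only [Set.mem_iInter]
      intro j hj
      exact hω j (Finset.mem_Ico.1 hj).1
    have hq : ∀ q : ℕ, P Tᶜ ≤ (1 - P (D' K)) ^ q := by
      intro q
      calc P Tᶜ ≤ P (⋂ j ∈ Finset.Ico r (r + q), (B K ((j + 1) * (K + 2)))ᶜ) :=
            measure_mono (hTsub q)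
        _ = ∏ j ∈ Finset.Ico r (r + q), P ((B K ((j + 1) * (K + 2)))ᶜ) := by
            have h := hprod (Finset.Ico r (r + q))
            simp only [hBc] at h
            exact h
        _ = (1 - P (D' K)) ^ q := by
            rw [Finset.prod_congr rfl fun j _ => hPBc j, Finset.prod_const, Nat.card_Ico]
            congr 1
            omega
    have h1p : 1 - P (D' K) < 1 :=
      ENNReal.sub_lt_self ENNReal.one_ne_top one_ne_zero hp.ne'
    have h0 : P Tᶜ = 0 := by
      have htd := ENNReal.tendsto_pow_atTop_nhds_zero_of_lt_one h1p
      have hle : P Tᶜ ≤ 0 := ge_of_tendsto htd (Filter.Eventually.of_forall hq)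
      exact le_antisymm hle zero_le
    exact (prob_compl_eq_zero_iff hTm).1 h0
  -- almost-everywhere combination
  have hae : ∀ᵐ ω ∂P, ∀ K r : ℕ, ∃ j, r ≤ j ∧ ω ∈ B (K₀ + K) ((j + 1) * ((K₀ + K) + 2)) := by
    refine ae_all_iff.2 fun K => ae_all_iff.2 fun r => ?_
    have h1 := key (K₀ + K) (Nat.le_add_right _ _) r
    have hsm : MeasurableSet {ω | ∃ j, r ≤ j ∧ ω ∈ B (K₀ + K) ((j + 1) * ((K₀ + K) + 2))} := by
      have hset : {ω | ∃ j, r ≤ j ∧ ω ∈ B (K₀ + K) ((j + 1) * ((K₀ + K) + 2))}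
          = ⋃ j, ⋃ (_ : r ≤ j), B (K₀ + K) ((j + 1) * ((K₀ + K) + 2)) := by
        ext ω; simp [Set.mem_iUnion]
      rw [hset]
      exact MeasurableSet.iUnion fun j => MeasurableSet.iUnion fun _ => hBmeas _ _
    have h0 : P {ω | ∃ j, r ≤ j ∧ ω ∈ B (K₀ + K) ((j + 1) * ((K₀ + K) + 2))}ᶜ = 0 :=
      (prob_compl_eq_zero_iff hsm).2 h1
    rw [MeasureTheory.ae_iff]
    simpa only [Set.compl_setOf, not_exists, not_and] using h0
  -- pathwise conclusion
  have hpath : ∀ ω, (∀ K r : ℕ, ∃ j, r ≤ j ∧ ω ∈ B (K₀ + K) ((j + 1) * ((K₀ + K) + 2))) →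
      ∃ n : ℕ, N ≤ n + 1 ∧
      (∑ m ∈ Finset.range 𝔐, (c / 2) * ‖Θ (n + 1) ω - X ((n : ℤ) + 1, -((m : ℤ) + 1)) ω‖ ^ 2)
        > (∑ m ∈ Finset.range 𝔐, (c / 2) * ‖Θ n ω - X ((n : ℤ) + 1, -((m : ℤ) + 1)) ω‖ ^ 2) := by
    intro ω hQ
    obtain ⟨C, hC0, hCS, hCX⟩ := hSbound ω
    -- geometric tail bound
    have hgeo : ∀ a b : ℕ, ∑ k ∈ Finset.Ico a b, |ρ| ^ k ≤ |ρ| ^ a * (1 - |ρ|)⁻¹ := by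
      intro a b
      rcases le_or_gt a b with hab | hab
      · rw [Finset.sum_Ico_eq_sum_range]
        simp_rw [pow_add]
        rw [← Finset.mul_sum]
        have h1 : ∑ i ∈ Finset.range (b - a), |ρ| ^ i ≤ (1 - |ρ|)⁻¹ := by
          have h2 := Summable.sum_le_tsum (Finset.range (b - a))
            (fun i _ => by positivity) (summable_geometric_of_lt_one hρ0 hρ)
          rwa [tsum_geometric_of_lt_one hρ0 hρ] at h2
        exact mul_le_mul_of_nonneg_left h1 (by positivity)
      · rw [Finset.Ico_eq_empty (by omega), Finset.sum_empty]
        have hinv : (0:ℝ) ≤ (1 - |ρ|)⁻¹ := inv_nonneg.2 (by linarith)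
        positivity
    -- the deviation of the trajectory from the truncated stationary sum
    have htail : ∀ K n : ℕ, K + 1 ≤ n → ‖Θ n ω - trunc K n ω‖
        ≤ |ρ| ^ n * ‖Θ 0 ω‖ + (c * γ) * C * (|ρ| ^ (K + 1) * (1 - |ρ|)⁻¹) := by
      intro K n hKn
      have hsplit : Θ n ω - trunc K n ω = ρ ^ n • Θ 0 ω
          + ∑ k ∈ Finset.Ico (K + 1) n, (c * γ * ρ ^ k) • S ((n : ℤ) - k) ω := by
        rw [hform n ω]
        have hs := Finset.sum_range_add_sum_Ico
          (fun k => (c * γ * ρ ^ k) • S ((n : ℤ) - k) ω) hKn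
        show ρ ^ n • Θ 0 ω + ∑ k ∈ Finset.range n, (c * γ * ρ ^ k) • S ((n : ℤ) - k) ω
          - ∑ k ∈ Finset.range (K + 1), (c * γ * ρ ^ k) • S ((n : ℤ) - k) ω = _
        rw [← hs]
        abel
      rw [hsplit]
      calc ‖ρ ^ n • Θ 0 ω + ∑ k ∈ Finset.Ico (K + 1) n, (c * γ * ρ ^ k) • S ((n : ℤ) - k) ω‖
          ≤ ‖ρ ^ n • Θ 0 ω‖ + ‖∑ k ∈ Finset.Ico (K + 1) n, (c * γ * ρ ^ k) • S ((n : ℤ) - k) ω‖ :=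
            norm_add_le _ _
        _ ≤ |ρ| ^ n * ‖Θ 0 ω‖ + (c * γ) * C * (|ρ| ^ (K + 1) * (1 - |ρ|)⁻¹) := by
            have h1 : ‖ρ ^ n • Θ 0 ω‖ = |ρ| ^ n * ‖Θ 0 ω‖ := by
              rw [norm_smul, Real.norm_eq_abs, abs_pow]
            have h2 : ‖∑ k ∈ Finset.Ico (K + 1) n, (c * γ * ρ ^ k) • S ((n : ℤ) - k) ω‖
                ≤ (c * γ) * C * (|ρ| ^ (K + 1) * (1 - |ρ|)⁻¹) := by
              calc ‖∑ k ∈ Finset.Ico (K + 1) n, (c * γ * ρ ^ k) • S ((n : ℤ) - k) ω‖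
                  ≤ ∑ k ∈ Finset.Ico (K + 1) n, ‖(c * γ * ρ ^ k) • S ((n : ℤ) - k) ω‖ :=
                    norm_sum_le _ _
                _ ≤ ∑ k ∈ Finset.Ico (K + 1) n, (c * γ) * C * |ρ| ^ k := by
                    refine Finset.sum_le_sum fun k _ => ?_
                    rw [norm_smul, Real.norm_eq_abs, abs_mul, abs_pow,
                      abs_of_pos hcγ]
                    calc c * γ * |ρ| ^ k * ‖S ((n : ℤ) - k) ω‖
                        ≤ c * γ * |ρ| ^ k * C := by
                          apply mul_le_mul_of_nonneg_left (hCS _) (by positivity)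
                      _ = c * γ * C * |ρ| ^ k := by ring
                _ = (c * γ) * C * ∑ k ∈ Finset.Ico (K + 1) n, |ρ| ^ k := by
                    rw [Finset.mul_sum]
                _ ≤ (c * γ) * C * (|ρ| ^ (K + 1) * (1 - |ρ|)⁻¹) := by
                    apply mul_le_mul_of_nonneg_left (hgeo _ _) (by positivity)
            linarith
    -- choosing K
    have htendK : Filter.Tendsto
        (fun K : ℕ => (c * γ) * C * (|ρ| ^ (K + 1) * (1 - |ρ|)⁻¹)) Filter.atTop (nhds 0) := by
      have h1 : Filter.Tendsto (fun K : ℕ => |ρ| ^ K) Filter.atTop (nhds 0) :=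
        tendsto_pow_atTop_nhds_zero_of_lt_one hρ0 hρ
      have h2 := h1.const_mul ((c * γ) * C * (1 - |ρ|)⁻¹ * |ρ|)
      rw [mul_zero] at h2
      refine h2.congr fun K => ?_
      rw [pow_succ]
      ring
    obtain ⟨K₁, hK₁⟩ := Filter.eventually_atTop.1
      (htendK.eventually_lt_const (show (0:ℝ) < δ / 16 by positivity))
    -- choosing the time threshold
    have htendn : Filter.Tendsto (fun n : ℕ => |ρ| ^ n * ‖Θ 0 ω‖) Filter.atTop (nhds 0) := by
      have h1 : Filter.Tendsto (fun n : ℕ => |ρ| ^ n) Filter.atTop (nhds 0) :=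
        tendsto_pow_atTop_nhds_zero_of_lt_one hρ0 hρ
      have h2 := h1.mul_const ‖Θ 0 ω‖
      rwa [zero_mul] at h2
    obtain ⟨n₁, hn₁⟩ := Filter.eventually_atTop.1
      (htendn.eventually_lt_const (show (0:ℝ) < δ / 16 by positivity))
    -- put things together
    set K := K₀ + K₁ with hKdef
    obtain ⟨j, hjr, hjB⟩ := hQ K₁ (max n₁ N)
    set n := (j + 1) * (K + 2) with hndef
    have hjn : j + 1 ≤ n := Nat.le_mul_of_pos_right _ (by omega)
    have hrn : max n₁ N < n := lt_of_lt_of_le (Nat.lt_succ_of_le hjr) hjn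
    have hnN : N ≤ n := le_trans (le_max_right _ _) hrn.le
    have hnn₁ : n₁ ≤ n := le_trans (le_max_left _ _) hrn.le
    have hKn : K + 1 ≤ n := by
      have : 1 * (K + 2) ≤ (j + 1) * (K + 2) := Nat.mul_le_mul_right _ (by omega)
      omega
    have htail' : ‖Θ n ω - trunc K n ω‖ ≤ δ / 8 := by
      have h1 := htail K n hKn
      have h2 : |ρ| ^ n * ‖Θ 0 ω‖ < δ / 16 := hn₁ n hnn₁
      have h3 : (c * γ) * C * (|ρ| ^ (K + 1) * (1 - |ρ|)⁻¹) < δ / 16 :=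
        hK₁ K (Nat.le_add_left _ _)
      linarith
    have hgap := aux_perturb ρ hρ.le (trunc K n ω) (Θ n ω)
      ((c * γ) • S ((n : ℤ) + 1) ω) (Ybar n ω) (δ / 8) (δ / 2) htail' hjB
    have hlt : ‖Θ n ω - Ybar n ω‖ < ‖Θ (n + 1) ω - Ybar n ω‖ := by
      rw [hrec' n ω]
      have := hgap
      linarith
    exact ⟨n, by omega,
      aux_loss c hc 𝔐 h𝔐 (fun m => X ((n : ℤ) + 1, -((m : ℤ) + 1)) ω)
        (Θ n ω) (Θ (n + 1) ω) hlt⟩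
  -- conclude
  have htar : MeasurableSet {ω : Ω | ∃ n : ℕ, N ≤ n + 1 ∧
      (∑ m ∈ Finset.range 𝔐, (c / 2) * ‖Θ (n + 1) ω - X ((n : ℤ) + 1, -((m : ℤ) + 1)) ω‖ ^ 2)
        > (∑ m ∈ Finset.range 𝔐, (c / 2) * ‖Θ n ω - X ((n : ℤ) + 1, -((m : ℤ) + 1)) ω‖ ^ 2)} := by
    have hset : {ω : Ω | ∃ n : ℕ, N ≤ n + 1 ∧
        (∑ m ∈ Finset.range 𝔐, (c / 2) * ‖Θ (n + 1) ω - X ((n : ℤ) + 1, -((m : ℤ) + 1)) ω‖ ^ 2)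
          > (∑ m ∈ Finset.range 𝔐, (c / 2) * ‖Θ n ω - X ((n : ℤ) + 1, -((m : ℤ) + 1)) ω‖ ^ 2)}
        = ⋃ n : ℕ, ⋃ (_ : N ≤ n + 1),
          {ω : Ω | (∑ m ∈ Finset.range 𝔐, (c / 2) * ‖Θ n ω - X ((n : ℤ) + 1, -((m : ℤ) + 1)) ω‖ ^ 2)
            < (∑ m ∈ Finset.range 𝔐, (c / 2) * ‖Θ (n + 1) ω - X ((n : ℤ) + 1, -((m : ℤ) + 1)) ω‖ ^ 2)} := by
      ext ω
      simp only [Set.mem_iUnion, Set.mem_setOf_eq, exists_prop]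
    rw [hset]
    refine MeasurableSet.iUnion fun n => MeasurableSet.iUnion fun _ => ?_
    refine measurableSet_lt ?_ ?_
    · refine Finset.measurable_sum _ fun m _ => ?_
      exact (((hΘmeas n).sub (hmeas _)).norm.pow_const 2).const_mul _
    · refine Finset.measurable_sum _ fun m _ => ?_
      exact (((hΘmeas (n + 1)).sub (hmeas _)).norm.pow_const 2).const_mul _
  have hfin : ∀ᵐ ω ∂P, ω ∈ {ω : Ω | ∃ n : ℕ, N ≤ n + 1 ∧
      (∑ m ∈ Finset.range 𝔐, (c / 2) * ‖Θ (n + 1) ω - X ((n : ℤ) + 1, -((m : ℤ) + 1)) ω‖ ^ 2)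
        > (∑ m ∈ Finset.range 𝔐, (c / 2) * ‖Θ n ω - X ((n : ℤ) + 1, -((m : ℤ) + 1)) ω‖ ^ 2)} :=
    hae.mono fun ω hω => hpath ω hω
  refine (prob_compl_eq_zero_iff htar).1 ?_
  have := MeasureTheory.ae_iff.1 hfin
  simpa only [Set.compl_setOf, Set.mem_setOf_eq] using this
end

section
/- Let d ∈ ℕ, η ∈ (0,1), let (Ω,𝓕,ℙ) be a probability space, let Y_k : Ω → ℝ^d, k ∈ ℕ₀, be non-degenerate i.i.d. random variables with E[‖Y₀‖] < ∞, let Z : Ω → ℝ^d be a non-degenerate random variable, assume that (Y_k)_{k∈ℕ₀} and Z are independent, let A = {Σ_{k=1}^∞ η(1−η)^{k−1} ‖Y_k‖ < ∞}, and let χ : Ω → ℝ^d be a random variable which satisfies χ(ω) = Σ_{k=1}^∞ η(1−η)^{k−1} Y_k(ω) for all ω ∈ A. Then ℙ( ‖(1−η)χ + ηY₀ − Z‖ > ‖χ − Z‖ ) > 0. -/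
open MeasureTheory ProbabilityTheory
open scoped ENNReal

/-- The support of a random variable `X`, i.e. the support of its law `ℙ_X`: the set of
points `x` such that every open set containing `x` has positive `ℙ_X`-measure. -/
def rvSupport {Ω E : Type*} [MeasurableSpace Ω] [TopologicalSpace E]
    (P : Measure Ω) (X : Ω → E) : Set E :=
  {x | ∀ U : Set E, IsOpen U → x ∈ U → 0 < P (X ⁻¹' U)}

/-- A random variable is non-degenerate if the interior of its support is non-empty. -/
def NonDegenerate {Ω E : Type*} [MeasurableSpace Ω] [TopologicalSpace E]
    (P : Measure Ω) (X : Ω → E) : Prop :=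
  (interior (rvSupport P X)).Nonempty

lemma rvSupport_eq_of_ident {Ω E : Type*} [MeasurableSpace Ω] [MeasurableSpace E]
    [TopologicalSpace E] [OpensMeasurableSpace E] {P : Measure Ω} {X X' : Ω → E}
    (h : IdentDistrib X X' P P) : rvSupport P X = rvSupport P X' := by
  ext x
  constructor <;> intro hx U hU hxU
  · rw [← h.measure_mem_eq hU.measurableSet]; exact hx U hU hxU
  · rw [h.measure_mem_eq hU.measurableSet]; exact hx U hU hxU

lemma geom_key {E : Type*} [NormedAddCommGroup E] [NormedSpace ℝ E]
    {η r : ℝ} (hη0 : 0 < η) (hη1 : η < 1) (hr : 0 < r)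
    {a z : E} (haz : a ≠ z) {c y' z' : E}
    (hc : ‖c - a‖ ≤ η * r / 9)
    (hy' : ‖y' - (a + (r/2) • (‖a - z‖⁻¹ • (a - z)))‖ ≤ η * r / 9)
    (hz' : ‖z' - z‖ ≤ η * r / 9) :
    ‖c - z'‖ < ‖(1 - η) • c + η • y' - z'‖ := by
  set v := a - z with hv
  have hvne : v ≠ 0 := sub_ne_zero.2 haz
  have hvn : (0:ℝ) < ‖v‖ := norm_pos_iff.2 hvne
  set y := a + (r/2) • (‖v‖⁻¹ • v) with hy
  have key : ‖(1 - η) • a + η • y - z‖ = ‖v‖ + η * (r/2) := by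
    have h1 : (1 - η) • a + η • y - z = (1 + η * (r/2) * ‖v‖⁻¹) • v := by
      simp only [hy, hv, smul_smul]
      module
    rw [h1, norm_smul, Real.norm_eq_abs, abs_of_nonneg (by positivity)]
    field_simp
  have hdec : (1 - η) • c + η • y' - z'
      = ((1 - η) • a + η • y - z) + ((1 - η) • (c - a) + η • (y' - y) - (z' - z)) := by
    module
  have hDnorm : ‖(1 - η) • (c - a) + η • (y' - y) - (z' - z)‖ ≤ 2 * (η * r / 9) := by
    have h2 : ‖(1 - η) • (c - a) + η • (y' - y) - (z' - z)‖
        ≤ ‖(1 - η) • (c - a)‖ + ‖η • (y' - y)‖ + ‖z' - z‖ :=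
      (norm_sub_le _ _).trans (by gcongr; exact norm_add_le _ _)
    rw [norm_smul, norm_smul, Real.norm_eq_abs, Real.norm_eq_abs,
      abs_of_nonneg (by linarith), abs_of_nonneg hη0.le] at h2
    nlinarith [norm_nonneg (c - a), norm_nonneg (y' - y), norm_nonneg (z' - z)]
  have hlow : ‖v‖ + η * (r/2) - 2 * (η * r / 9) ≤ ‖(1 - η) • c + η • y' - z'‖ := by
    have hns := norm_sub_le ((1 - η) • c + η • y' - z')
      ((1 - η) • (c - a) + η • (y' - y) - (z' - z))
    have heq : (1 - η) • c + η • y' - z' - ((1 - η) • (c - a) + η • (y' - y) - (z' - z))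
        = (1 - η) • a + η • y - z := by rw [hdec]; abel
    rw [heq, key] at hns
    linarith
  have hup : ‖c - z'‖ ≤ ‖v‖ + 2 * (η * r / 9) := by
    have h3 : c - z' = v + ((c - a) - (z' - z)) := by rw [hv]; abel
    calc ‖c - z'‖ ≤ ‖v‖ + ‖(c - a) - (z' - z)‖ := by rw [h3]; exact norm_add_le _ _
      _ ≤ ‖v‖ + (‖c - a‖ + ‖z' - z‖) := by gcongr; exact norm_sub_le _ _
      _ ≤ _ := by linarith
  nlinarith

lemma tail_meas {Ω : Type*} [MeasurableSpace Ω] {E : Type*} [MeasurableSpace E]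
    [NormedAddCommGroup E] [OpensMeasurableSpace E]
    {W : ℕ → Ω → E} (hW : ∀ k, Measurable (W k)) (c : ℕ → ℝ) (t : ℝ≥0∞) :
    MeasurableSet {ω | ∑' k : ℕ, ENNReal.ofReal (c k * ‖W k ω‖) ≤ t} := by
  have hm : Measurable fun ω => ∑' k : ℕ, ENNReal.ofReal (c k * ‖W k ω‖) :=
    Measurable.ennreal_tsum fun k => (((hW k).norm).const_mul _).ennreal_ofReal
  exact hm measurableSet_Iic

set_option maxHeartbeats 2000000 in
/-- **The test loss strictly increases with strictly positive probability.** Let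
`η ∈ (0,1)`, let `Y_k : Ω → ℝ^d`, `k ∈ ℕ₀`, be non-degenerate i.i.d. random variables with
`E[‖Y₀‖] < ∞`, let `Z : Ω → ℝ^d` be a non-degenerate random variable independent of
`(Y_k)_{k∈ℕ₀}`, let `A = {Σ_{k=1}^∞ η(1−η)^{k−1}‖Y_k‖ < ∞}` and let `χ : Ω → ℝ^d` be a
random variable with `χ(ω) = Σ_{k=1}^∞ η(1−η)^{k−1} Y_k(ω)` for all `ω ∈ A`. Then
`ℙ(‖(1−η)χ + ηY₀ − Z‖ > ‖χ − Z‖) > 0`. -/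
theorem stmt_6 {Ω : Type*} [MeasurableSpace Ω] (P : Measure Ω) [IsProbabilityMeasure P]
    (d : ℕ) (hd : 0 < d) (η : ℝ) (hη : η ∈ Set.Ioo (0 : ℝ) 1)
    (Y : ℕ → Ω → EuclideanSpace ℝ (Fin d))
    (hYmeas : ∀ k, Measurable (Y k))
    (hYindep : iIndepFun Y P)
    (hYident : ∀ k l : ℕ, IdentDistrib (Y k) (Y l) P P)
    (hYnd : ∀ k, NonDegenerate P (Y k))
    (hYint : Integrable (fun ω => ‖Y 0 ω‖) P)
    (Z : Ω → EuclideanSpace ℝ (Fin d)) (hZmeas : Measurable Z)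
    (hZnd : NonDegenerate P Z)
    (hindepZ : IndepFun (fun ω (k : ℕ) => Y k ω) Z P)
    (A : Set Ω)
    (hA : A = {ω | Summable fun k : ℕ => η * (1 - η) ^ k * ‖Y (k + 1) ω‖})
    (χ : Ω → EuclideanSpace ℝ (Fin d)) (hχmeas : Measurable χ)
    (hχ : ∀ ω ∈ A, HasSum (fun k : ℕ => (η * (1 - η) ^ k) • Y (k + 1) ω) (χ ω)) :
    0 < P {ω | ‖(1 - η) • χ ω + η • Y 0 ω - Z ω‖ > ‖χ ω - Z ω‖} := by
  classical
  obtain ⟨hη0, hη1⟩ := hη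
  have h1η0 : (0:ℝ) ≤ 1 - η := by linarith
  have h1η1 : (1:ℝ) - η < 1 := by linarith
  have hco : ∀ m : ℕ, (0:ℝ) ≤ η * (1 - η) ^ m := fun m => by positivity
  -- support balls
  obtain ⟨a, ha⟩ := hYnd 0
  obtain ⟨r, hr0, hrball⟩ := Metric.isOpen_iff.1 isOpen_interior a ha
  have hballY : Metric.ball a r ⊆ rvSupport P (Y 0) := hrball.trans interior_subset
  obtain ⟨b, hb⟩ := hZnd
  obtain ⟨s, hs0, hsball⟩ := Metric.isOpen_iff.1 isOpen_interior b hb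
  have hballZ : Metric.ball b s ⊆ rvSupport P Z := hsball.trans interior_subset
  -- pick z ∈ ball b s with z ≠ a
  obtain ⟨z, hzb, hza⟩ : ∃ z, z ∈ Metric.ball b s ∧ z ≠ a := by
    rcases eq_or_ne b a with hba | hba
    · set e : EuclideanSpace ℝ (Fin d) := EuclideanSpace.single (⟨0, hd⟩ : Fin d) (1:ℝ) with he_def
      have he : ‖e‖ = 1 := by rw [he_def, EuclideanSpace.norm_single, norm_one]
      refine ⟨b + (s/2) • e, ?_, ?_⟩
      · rw [Metric.mem_ball, dist_eq_norm, add_sub_cancel_left, norm_smul, he, mul_one,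
          Real.norm_eq_abs, abs_of_nonneg (by linarith)]
        linarith
      · intro h
        rw [hba] at h
        have h2 : (s/2) • e = 0 := by
          have := congrArg (fun w => w - a) h
          simpa [add_sub_cancel_left] using this
        have h3 : ‖(s/2) • e‖ = s/2 := by
          rw [norm_smul, he, mul_one, Real.norm_eq_abs, abs_of_nonneg (by linarith)]
        rw [h2, norm_zero] at h3
        linarith
    · exact ⟨b, Metric.mem_ball_self hs0, hba⟩
  have hazne : a ≠ z := Ne.symm hza
  set v : EuclideanSpace ℝ (Fin d) := a - z with hv_def
  have hvne : v ≠ 0 := sub_ne_zero.2 hazne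
  set u : EuclideanSpace ℝ (Fin d) := ‖v‖⁻¹ • v with hu_def
  set y : EuclideanSpace ℝ (Fin d) := a + (r/2) • u with hy_def
  have hunorm : ‖u‖ = 1 := by
    rw [hu_def, norm_smul, norm_inv, norm_norm, inv_mul_cancel₀ (norm_ne_zero_iff.2 hvne)]
  have hymem : y ∈ Metric.ball a r := by
    rw [Metric.mem_ball, dist_eq_norm, hy_def, add_sub_cancel_left, norm_smul, hunorm, mul_one,
      Real.norm_eq_abs, abs_of_nonneg (by linarith)]
    linarith
  set ε : ℝ := η * r / 9 with hε_def
  have hε0 : 0 < ε := by rw [hε_def]; exact div_pos (mul_pos hη0 hr0) (by norm_num)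
  set Eint : ℝ := ∫ ω, ‖Y 0 ω‖ ∂P with hEint_def
  have hEint0 : 0 ≤ Eint := integral_nonneg fun _ => norm_nonneg _
  obtain ⟨N, hN⟩ : ∃ N : ℕ, (1 - η)^N * (‖a‖ + Eint + 1) < ε/8 := by
    obtain ⟨N, hN⟩ := exists_pow_lt_of_lt_one
      (show (0:ℝ) < ε/8/(‖a‖ + Eint + 1) from
        div_pos (by linarith) (by linarith [norm_nonneg a])) h1η1
    refine ⟨N, ?_⟩
    rw [lt_div_iff₀ (by linarith [norm_nonneg a])] at hN
    linarith
  have hpowN : (0:ℝ) ≤ (1-η)^N := pow_nonneg h1η0 N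
  have hNa : (1 - η)^N * ‖a‖ ≤ ε/8 := by nlinarith [norm_nonneg a]
  have hNE : (1 - η)^N * Eint ≤ ε/8 := by nlinarith [norm_nonneg a]
  -- geometric series
  have hgs : HasSum (fun k : ℕ => η * (1 - η)^k) 1 := by
    have h := (hasSum_geometric_of_lt_one h1η0 h1η1).mul_left η
    rwa [sub_sub_cancel, mul_inv_cancel₀ hη0.ne'] at h
  -- events
  set Bs : ℕ → Set (EuclideanSpace ℝ (Fin d)) :=
    fun i => if i = 0 then Metric.ball y ε else Metric.ball a (ε/4) with hBs_def
  have hBsmeas : ∀ i, MeasurableSet (Bs i) := fun i => by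
    rw [hBs_def]; dsimp only; split <;> exact measurableSet_ball
  set head : Set Ω := ⋂ i ∈ Finset.range (N+1), Y i ⁻¹' Bs i with hhead_def
  set Tev : Set Ω := {ω | ∑' k : ℕ, ENNReal.ofReal (η * (1-η)^(N+k) * ‖Y (N+1+k) ω‖)
    ≤ ENNReal.ofReal (ε/4)} with hTev_def
  have hTmeas : Measurable fun ω => ∑' k : ℕ,
      ENNReal.ofReal (η * (1-η)^(N+k) * ‖Y (N+1+k) ω‖) := by
    apply Measurable.ennreal_tsum
    intro k
    exact ((hYmeas (N+1+k)).norm.const_mul _).ennreal_ofReal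
  -- lintegral of T
  have hterm : ∀ k : ℕ, η * (1-η)^(N+k) * Eint = (η * (1-η)^N * Eint) * (1-η)^k := by
    intro k; rw [pow_add]; ring
  have hTlint : ∫⁻ ω, ∑' k : ℕ, ENNReal.ofReal (η * (1-η)^(N+k) * ‖Y (N+1+k) ω‖) ∂P
      = ENNReal.ofReal ((1-η)^N * Eint) := by
    rw [lintegral_tsum fun k =>
      (((hYmeas (N+1+k)).norm.const_mul _).ennreal_ofReal).aemeasurable]
    have heach : ∀ k : ℕ, ∫⁻ ω, ENNReal.ofReal (η * (1-η)^(N+k) * ‖Y (N+1+k) ω‖) ∂P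
        = ENNReal.ofReal (η * (1-η)^(N+k) * Eint) := by
      intro k
      have hid : IdentDistrib (fun ω => ‖Y (N+1+k) ω‖) (fun ω => ‖Y 0 ω‖) P P :=
        (hYident (N+1+k) 0).comp measurable_norm
      have hint : Integrable (fun ω => ‖Y (N+1+k) ω‖) P := hid.integrable_iff.2 hYint
      calc ∫⁻ ω, ENNReal.ofReal (η * (1-η)^(N+k) * ‖Y (N+1+k) ω‖) ∂P
          = ∫⁻ ω, ENNReal.ofReal (η * (1-η)^(N+k)) * ENNReal.ofReal (‖Y (N+1+k) ω‖) ∂P := by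
            congr 1; funext ω; rw [ENNReal.ofReal_mul (hco _)]
        _ = ENNReal.ofReal (η * (1-η)^(N+k)) * ∫⁻ ω, ENNReal.ofReal (‖Y (N+1+k) ω‖) ∂P :=
            lintegral_const_mul _ ((hYmeas _).norm.ennreal_ofReal)
        _ = ENNReal.ofReal (η * (1-η)^(N+k)) * ENNReal.ofReal Eint := by
            rw [← ofReal_integral_eq_lintegral_ofReal hint
              (Filter.Eventually.of_forall fun ω => norm_nonneg _), hid.integral_eq]
        _ = ENNReal.ofReal (η * (1-η)^(N+k) * Eint) := by
            rw [← ENNReal.ofReal_mul (hco _)]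
    rw [tsum_congr heach]
    have hsummable : Summable (fun k : ℕ => η * (1-η)^(N+k) * Eint) := by
      refine Summable.congr ?_ (fun k => (hterm k).symm)
      exact (summable_geometric_of_lt_one h1η0 h1η1).mul_left _
    rw [← ENNReal.ofReal_tsum_of_nonneg (fun k => mul_nonneg (hco _) hEint0) hsummable]
    congr 1
    rw [tsum_congr hterm, tsum_mul_left, tsum_geometric_of_lt_one h1η0 h1η1, sub_sub_cancel]
    field_simp
  -- Markov
  have hTevc_lt : P Tevᶜ < 1 := by
    have hsub : Tevᶜ ⊆ {ω | ENNReal.ofReal (ε/4)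
        ≤ ∑' k : ℕ, ENNReal.ofReal (η * (1-η)^(N+k) * ‖Y (N+1+k) ω‖)} := by
      intro ω hω
      simp only [hTev_def, Set.mem_compl_iff, Set.mem_setOf_eq, not_le] at hω
      exact hω.le
    have h1 : ENNReal.ofReal (ε/4) * P Tevᶜ
        ≤ ∫⁻ ω, ∑' k : ℕ, ENNReal.ofReal (η * (1-η)^(N+k) * ‖Y (N+1+k) ω‖) ∂P := by
      refine le_trans ?_ (mul_meas_ge_le_lintegral hTmeas (ENNReal.ofReal (ε/4)))
      exact mul_le_mul_right (measure_mono hsub) _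
    rw [hTlint] at h1
    have h2 : ENNReal.ofReal ((1-η)^N * Eint) < ENNReal.ofReal (ε/4) * 1 := by
      rw [mul_one]
      exact (ENNReal.ofReal_lt_ofReal_iff (by linarith)).2 (by nlinarith)
    exact (ENNReal.mul_lt_mul_iff_right (ENNReal.ofReal_pos.2 (by linarith)).ne'
      ENNReal.ofReal_ne_top).1 (lt_of_le_of_lt h1 h2)
  have hTevpos : 0 < P Tev := by
    rw [pos_iff_ne_zero]
    intro h0
    have hle := measure_union_le (μ := P) Tev Tevᶜ
    rw [Set.union_compl_self, measure_univ, h0, zero_add] at hle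
    exact absurd hle (not_le.2 hTevc_lt)
  -- head probability
  have hsuppY : ∀ i : ℕ, Metric.ball a r ⊆ rvSupport P (Y i) := fun i => by
    rw [rvSupport_eq_of_ident (hYident i 0)]; exact hballY
  have hheadpos : 0 < P head := by
    rw [hhead_def, hYindep.measure_inter_preimage_eq_mul _ fun i _ => hBsmeas i,
      CanonicallyOrderedAdd.prod_pos]
    intro i _
    rcases eq_or_ne i 0 with h0 | h0
    · subst h0
      have : Bs 0 = Metric.ball y ε := by simp [hBs_def]
      rw [this]
      exact hsuppY 0 hymem _ Metric.isOpen_ball (Metric.mem_ball_self hε0)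
    · have : Bs i = Metric.ball a (ε/4) := by rw [hBs_def]; exact if_neg h0
      rw [this]
      exact hsuppY i (Metric.mem_ball_self hr0) _ Metric.isOpen_ball
        (Metric.mem_ball_self (by linarith))
  -- independence between head and Tev
  have hiI := hYindep.iIndep
  have hmYle : ∀ i : ℕ, (inferInstance :
      MeasurableSpace (EuclideanSpace ℝ (Fin d))).comap (Y i) ≤ ‹MeasurableSpace Ω› :=
    fun i => (hYmeas i).comap_le
  have hindepST : Indep
      (⨆ i ∈ {i : ℕ | i ≤ N}, (inferInstance :
        MeasurableSpace (EuclideanSpace ℝ (Fin d))).comap (Y i))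
      (⨆ i ∈ {i : ℕ | N+1 ≤ i}, (inferInstance :
        MeasurableSpace (EuclideanSpace ℝ (Fin d))).comap (Y i)) P := by
    refine indep_iSup_of_disjoint hmYle hiI ?_
    rw [Set.disjoint_left]
    intro i h1 h2
    simp only [Set.mem_setOf_eq] at h1 h2
    omega
  have hheadmS : MeasurableSet[⨆ i ∈ {i : ℕ | i ≤ N}, (inferInstance :
      MeasurableSpace (EuclideanSpace ℝ (Fin d))).comap (Y i)] head := by
    rw [hhead_def]
    refine MeasurableSet.biInter (Finset.range (N+1)).countable_toSet fun i hi => ?_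
    have h1 : MeasurableSet[(inferInstance :
        MeasurableSpace (EuclideanSpace ℝ (Fin d))).comap (Y i)] (Y i ⁻¹' Bs i) :=
      ⟨Bs i, hBsmeas i, rfl⟩
    have hle : (inferInstance : MeasurableSpace (EuclideanSpace ℝ (Fin d))).comap (Y i)
        ≤ ⨆ i ∈ {i : ℕ | i ≤ N}, (inferInstance :
          MeasurableSpace (EuclideanSpace ℝ (Fin d))).comap (Y i) := by
      refine le_iSup₂ (f := fun (i : ℕ) (_ : i ∈ {i : ℕ | i ≤ N}) => (inferInstance :
        MeasurableSpace (EuclideanSpace ℝ (Fin d))).comap (Y i)) i ?_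
      have hi' : i < N + 1 := Finset.mem_range.1 (Finset.mem_coe.1 hi)
      simp only [Set.mem_setOf_eq]
      omega
    exact hle _ h1
  have hTevmT : MeasurableSet[⨆ i ∈ {i : ℕ | N+1 ≤ i}, (inferInstance :
      MeasurableSpace (EuclideanSpace ℝ (Fin d))).comap (Y i)] Tev := by
    have hYk : ∀ k : ℕ, Measurable[⨆ i ∈ {i : ℕ | N+1 ≤ i}, (inferInstance :
        MeasurableSpace (EuclideanSpace ℝ (Fin d))).comap (Y i)] (Y (N+1+k)) := by
      intro k
      refine Measurable.mono (comap_measurable (Y (N+1+k))) ?_ le_rfl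
      refine le_iSup₂ (f := fun (i : ℕ) (_ : i ∈ {i : ℕ | N+1 ≤ i}) => (inferInstance :
        MeasurableSpace (EuclideanSpace ℝ (Fin d))).comap (Y i)) (N+1+k) ?_
      simp only [Set.mem_setOf_eq]
      omega
    rw [hTev_def]
    exact @tail_meas Ω (⨆ i ∈ {i : ℕ | N+1 ≤ i}, (inferInstance :
      MeasurableSpace (EuclideanSpace ℝ (Fin d))).comap (Y i)) _ _ _ _
      (fun k => Y (N+1+k)) hYk (fun k => η * (1-η)^(N+k)) (ENNReal.ofReal (ε/4))
  have hheadTev : P (head ∩ Tev) = P head * P Tev :=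
    (Indep_iff _ _ _).1 hindepST head Tev hheadmS hTevmT
  -- independence with Z
  set SG : Set (ℕ → EuclideanSpace ℝ (Fin d)) :=
    (⋂ i ∈ Finset.range (N+1), (fun g : ℕ → EuclideanSpace ℝ (Fin d) => g i) ⁻¹' Bs i) ∩
      {g | ∑' k : ℕ, ENNReal.ofReal (η * (1-η)^(N+k) * ‖g (N+1+k)‖)
        ≤ ENNReal.ofReal (ε/4)} with hSG_def
  have hSGmeas : MeasurableSet SG := by
    rw [hSG_def]
    refine MeasurableSet.inter ?_ ?_
    · exact MeasurableSet.biInter (Finset.range (N+1)).countable_toSet fun i _ =>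
        (measurable_pi_apply i) (hBsmeas i)
    · have hm : Measurable (fun g : ℕ → EuclideanSpace ℝ (Fin d) =>
          ∑' k : ℕ, ENNReal.ofReal (η * (1-η)^(N+k) * ‖g (N+1+k)‖)) :=
        Measurable.ennreal_tsum fun k =>
          (((measurable_pi_apply (N+1+k)).norm).const_mul _).ennreal_ofReal
      exact hm measurableSet_Iic
  have hpre : (fun ω (k : ℕ) => Y k ω) ⁻¹' SG = head ∩ Tev := by
    ext ω
    simp only [hSG_def, hhead_def, hTev_def, Set.mem_preimage, Set.mem_inter_iff,
      Set.mem_iInter, Set.mem_setOf_eq]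
  have htotpos : 0 < P (head ∩ Tev ∩ Z ⁻¹' Metric.ball z ε) := by
    rw [← hpre, hindepZ.measure_inter_preimage_eq_mul _ _ hSGmeas measurableSet_ball, hpre,
      hheadTev]
    have hZpos : 0 < P (Z ⁻¹' Metric.ball z ε) :=
      hballZ hzb _ Metric.isOpen_ball (Metric.mem_ball_self hε0)
    exact ENNReal.mul_pos (ENNReal.mul_pos hheadpos.ne' hTevpos.ne').ne' hZpos.ne'
  -- final inclusion
  refine lt_of_lt_of_le htotpos (measure_mono ?_)
  rintro ω ⟨⟨hhd, hTv⟩, hZv⟩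
  rw [hhead_def] at hhd
  have hmemY : ∀ i ∈ Finset.range (N+1), Y i ω ∈ Bs i := fun i hi => Set.mem_iInter₂.1 hhd i hi
  have hY0 : ‖Y 0 ω - y‖ ≤ ε := by
    have h := hmemY 0 (by simp)
    have hb0 : Bs 0 = Metric.ball y ε := by simp [hBs_def]
    rw [hb0, Metric.mem_ball, dist_eq_norm] at h
    exact h.le
  have hZ' : ‖Z ω - z‖ ≤ ε := by
    rw [Set.mem_preimage, Metric.mem_ball, dist_eq_norm] at hZv
    exact hZv.le
  have hTv' : ∑' k : ℕ, ENNReal.ofReal (η * (1-η)^(N+k) * ‖Y (N+1+k) ω‖)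
      ≤ ENNReal.ofReal (ε/4) := by
    have h := hTv
    rw [hTev_def] at h
    exact h
  -- summability / membership in A
  have hTfin : (∑' k : ℕ, ENNReal.ofReal (η * (1-η)^(N+k) * ‖Y (N+1+k) ω‖)) ≠ ⊤ :=
    ne_top_of_le_ne_top ENNReal.ofReal_ne_top hTv'
  have hsumtail : Summable (fun k : ℕ => η * (1-η)^(N+k) * ‖Y (N+1+k) ω‖) := by
    have h1 := ENNReal.summable_toReal hTfin
    exact h1.congr fun k => ENNReal.toReal_ofReal (mul_nonneg (hco _) (norm_nonneg _))
  have hrew : ∀ k : ℕ, η * (1-η)^(N+k) * ‖Y (N+1+k) ω‖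
      = η * (1-η)^(k+N) * ‖Y ((k+N)+1) ω‖ := by
    intro k
    rw [Nat.add_comm N k, show N+1+k = k+N+1 by omega]
  have hωA : ω ∈ A := by
    rw [hA]
    exact (summable_nat_add_iff (f := fun k : ℕ => η * (1 - η) ^ k * ‖Y (k + 1) ω‖) N).1 (hsumtail.congr hrew)
  have hfA : Summable (fun k : ℕ => η * (1 - η) ^ k * ‖Y (k + 1) ω‖) := by
    rw [hA] at hωA; exact hωA
  -- χ close to a
  have hχsum := hχ ω hωA
  have hasum_a : HasSum (fun k : ℕ => (η * (1-η)^k) • a) a := by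
    have h := hgs.smul_const a
    rwa [one_smul] at h
  have hdiffsum : HasSum (fun k : ℕ => (η * (1-η)^k) • (Y (k+1) ω - a)) (χ ω - a) := by
    have h := hχsum.sub hasum_a
    simpa only [smul_sub] using h
  have hq : Summable (fun k : ℕ => η * (1-η)^k * ‖Y (k+1) ω - a‖) := by
    refine Summable.of_nonneg_of_le (fun k => mul_nonneg (hco k) (norm_nonneg _)) (fun k => ?_)
      (hfA.add (hgs.summable.mul_right ‖a‖))
    calc η * (1-η)^k * ‖Y (k+1) ω - a‖ ≤ η * (1-η)^k * (‖Y (k+1) ω‖ + ‖a‖) :=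
          mul_le_mul_of_nonneg_left (norm_sub_le _ _) (hco k)
      _ = η * (1-η)^k * ‖Y (k+1) ω‖ + η * (1-η)^k * ‖a‖ := by ring
  have hnq : ∀ k : ℕ, ‖(η * (1-η)^k) • (Y (k+1) ω - a)‖ = η * (1-η)^k * ‖Y (k+1) ω - a‖ := by
    intro k
    rw [norm_smul, Real.norm_eq_abs, abs_of_nonneg (hco k)]
  have h1 : ‖χ ω - a‖ ≤ ∑' k : ℕ, η * (1-η)^k * ‖Y (k+1) ω - a‖ := by
    rw [← hdiffsum.tsum_eq, ← tsum_congr hnq]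
    exact norm_tsum_le_tsum_norm (hq.congr fun k => (hnq k).symm)
  rw [← Summable.sum_add_tsum_nat_add (f := fun k : ℕ => η * (1-η)^k * ‖Y (k+1) ω - a‖) N hq] at h1
  -- head part bound
  have hhd_bound : ∑ i ∈ Finset.range N, η * (1-η)^i * ‖Y (i+1) ω - a‖ ≤ ε/4 := by
    have hle : ∀ i ∈ Finset.range N, η * (1-η)^i * ‖Y (i+1) ω - a‖ ≤ η * (1-η)^i * (ε/4) := by
      intro i hi
      have hi' : i + 1 ∈ Finset.range (N+1) := by
        simp only [Finset.mem_range] at hi ⊢; omega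
      have hmem := hmemY (i+1) hi'
      have hbi : Bs (i+1) = Metric.ball a (ε/4) := by
        rw [hBs_def]; exact if_neg (Nat.succ_ne_zero i)
      rw [hbi, Metric.mem_ball, dist_eq_norm] at hmem
      exact mul_le_mul_of_nonneg_left hmem.le (hco i)
    calc ∑ i ∈ Finset.range N, η * (1-η)^i * ‖Y (i+1) ω - a‖
        ≤ ∑ i ∈ Finset.range N, η * (1-η)^i * (ε/4) := Finset.sum_le_sum hle
      _ ≤ ∑' i : ℕ, η * (1-η)^i * (ε/4) :=
          Summable.sum_le_tsum _ (fun i _ => mul_nonneg (hco i) (by linarith)) (hgs.summable.mul_right _)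
      _ = ε/4 := by rw [tsum_mul_right, hgs.tsum_eq, one_mul]
  -- tail part bound
  have hRsum : Summable (fun k : ℕ => η * (1-η)^(k+N) * ‖Y ((k+N)+1) ω‖) :=
    hsumtail.congr hrew
  have haux : Summable (fun k : ℕ => η * (1-η)^(k+N) * ‖a‖) := by
    have heq : (fun k : ℕ => η * (1-η)^(k+N) * ‖a‖)
        = fun k : ℕ => ((1-η)^N) * (η * (1-η)^k * ‖a‖) := by
      funext k; rw [pow_add]; ring
    rw [heq]
    exact (hgs.summable.mul_right ‖a‖).mul_left _
  have htail_bound : ∑' k : ℕ, η * (1-η)^(k+N) * ‖Y ((k+N)+1) ω - a‖ ≤ ε/4 + ε/8 := by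
    have hple : ∀ k : ℕ, η * (1-η)^(k+N) * ‖Y ((k+N)+1) ω - a‖
        ≤ η * (1-η)^(k+N) * ‖Y ((k+N)+1) ω‖ + η * (1-η)^(k+N) * ‖a‖ := by
      intro k
      calc η * (1-η)^(k+N) * ‖Y ((k+N)+1) ω - a‖
          ≤ η * (1-η)^(k+N) * (‖Y ((k+N)+1) ω‖ + ‖a‖) :=
            mul_le_mul_of_nonneg_left (norm_sub_le _ _) (hco _)
        _ = _ := by ring
    have hsum_le := Summable.tsum_le_tsum hple ((summable_nat_add_iff (f := fun k : ℕ => η * (1-η)^k * ‖Y (k+1) ω - a‖) N).2 hq) (hRsum.add haux)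
    rw [Summable.tsum_add hRsum haux] at hsum_le
    have hR : ∑' k : ℕ, η * (1-η)^(k+N) * ‖Y ((k+N)+1) ω‖ ≤ ε/4 := by
      have he1 : ∑' k : ℕ, η * (1-η)^(k+N) * ‖Y ((k+N)+1) ω‖
          = ∑' k : ℕ, η * (1-η)^(N+k) * ‖Y (N+1+k) ω‖ := tsum_congr fun k => (hrew k).symm
      rw [he1]
      have he2 : ENNReal.ofReal (∑' k : ℕ, η * (1-η)^(N+k) * ‖Y (N+1+k) ω‖)
          = ∑' k : ℕ, ENNReal.ofReal (η * (1-η)^(N+k) * ‖Y (N+1+k) ω‖) :=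
        ENNReal.ofReal_tsum_of_nonneg (fun k => mul_nonneg (hco _) (norm_nonneg _)) hsumtail
      have h3 := hTv'
      rw [← he2] at h3
      exact (ENNReal.ofReal_le_ofReal_iff (by linarith)).1 h3
    have hanorm : ∑' k : ℕ, η * (1-η)^(k+N) * ‖a‖ ≤ ε/8 := by
      have heq : (fun k : ℕ => η * (1-η)^(k+N) * ‖a‖)
          = fun k : ℕ => (η * (1-η)^N * ‖a‖) * (1-η)^k := by
        funext k; rw [pow_add]; ring
      rw [heq, tsum_mul_left, tsum_geometric_of_lt_one h1η0 h1η1, sub_sub_cancel]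
      rw [show η * (1-η)^N * ‖a‖ * (η)⁻¹ = (1-η)^N * ‖a‖ by field_simp]
      exact hNa
    linarith
  have hχa : ‖χ ω - a‖ ≤ η * r / 9 := by
    rw [← hε_def]
    have : ‖χ ω - a‖ ≤ ε/4 + (ε/4 + ε/8) := le_trans h1 (by linarith)
    linarith
  -- conclude
  show ‖χ ω - Z ω‖ < ‖(1 - η) • χ ω + η • Y 0 ω - Z ω‖
  refine geom_key hη0 hη1 hr0 hazne hχa ?_ ?_
  · rw [← hv_def, ← hu_def, ← hy_def, ← hε_def]
    exact hY0
  · rw [← hε_def]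
    exact hZ'
end

section
/- Let d, N ∈ ℕ, let γ₁, γ₂, …, γ_N ∈ ℝ, let (Ω,𝓕,ℙ) be a probability space, let X_n : Ω → ℝ^d, n ∈ {1,…,N}, be independent random variables, let m ∈ {1,…,N} satisfy γ_m ≠ 0, and assume that X_m is non-degenerate. Then the random variable Σ_{n=1}^N γ_n X_n is non-degenerate. -/
open MeasureTheory ProbabilityTheory
open scoped Pointwise Topology

/-- **Linear combinations of non-degenerate random variables.** Let `X₁, …, X_N : Ω → ℝ^d`
be independent random variables on a probability space, let `γ₁, …, γ_N ∈ ℝ`, let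
`m ∈ {1,…,N}` satisfy `γ_m ≠ 0`, and assume `X_m` is non-degenerate. Then
`Σ_{n=1}^N γ_n X_n` is non-degenerate. -/
theorem stmt_9 {Ω : Type*} [MeasurableSpace Ω] (P : Measure Ω) [IsProbabilityMeasure P]
    (d N : ℕ) (hd : 0 < d) (hN : 0 < N) (γ : Fin N → ℝ)
    (X : Fin N → Ω → EuclideanSpace ℝ (Fin d))
    (hmeas : ∀ n, Measurable (X n))
    (hindep : iIndepFun X P)
    (m : Fin N) (hγm : γ m ≠ 0) (hXm : NonDegenerate P (X m)) :
    NonDegenerate P (fun ω => ∑ n : Fin N, γ n • X n ω) := by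
  classical
  obtain ⟨x₀, hx₀⟩ := hXm
  set Y : Fin N → Ω → EuclideanSpace ℝ (Fin d) := fun n ω => γ n • X n ω with hYdef
  have hmeasY : ∀ n, Measurable (Y n) := fun n => (measurable_id.const_smul (γ n)).comp (hmeas n)
  have hindepY : iIndepFun Y P :=
    hindep.comp (fun n x => γ n • x) (fun n => measurable_id.const_smul (γ n))
  set Z : Ω → EuclideanSpace ℝ (Fin d) := fun ω => ∑ n ∈ Finset.univ.erase m, Y n ω with hZdef
  have hZmeas : Measurable Z := Finset.measurable_sum _ fun n _ => hmeasY n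
  have hZeq : Z = ∑ n ∈ Finset.univ.erase m, Y n := by
    funext ω; simp [hZdef, Finset.sum_apply]
  have hindepZY : IndepFun Z (Y m) P := by
    rw [hZeq]
    exact hindepY.indepFun_finsetSum_of_notMem hmeasY (Finset.notMem_erase m Finset.univ)
  -- the support of Z is nonempty
  have hZne : (rvSupport P Z).Nonempty := by
    by_contra h
    rw [Set.not_nonempty_iff_eq_empty] at h
    have h0 : (P.map Z) Set.univ = 0 := by
      apply measure_null_of_locally_null
      intro x _
      have hx : x ∉ rvSupport P Z := by simp [h]
      simp only [rvSupport, Set.mem_setOf_eq, not_forall] at hx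
      obtain ⟨U, hUopen, hxU, hU0⟩ := hx
      refine ⟨U, ?_, ?_⟩
      · rw [nhdsWithin_univ]; exact hUopen.mem_nhds hxU
      · rw [Measure.map_apply hZmeas hUopen.measurableSet]
        exact le_zero_iff.mp (not_lt.mp hU0)
    rw [Measure.map_apply hZmeas MeasurableSet.univ] at h0
    simp [measure_univ] at h0
  obtain ⟨z₀, hz₀⟩ := hZne
  -- rewrite the sum
  have hfun : (fun ω => ∑ n : Fin N, γ n • X n ω) = fun ω => Z ω + Y m ω := by
    funext ω
    rw [hZdef]
    exact (Finset.sum_erase_add Finset.univ _ (Finset.mem_univ m)).symm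
  rw [hfun]
  -- the candidate open set
  set V := interior (rvSupport P (X m)) with hVdef
  set W := (fun x : EuclideanSpace ℝ (Fin d) => z₀ + γ m • x) '' V with hWdef
  have hWopen : IsOpen W := by
    have hWeq : W = (Homeomorph.addLeft z₀) ''
        ((Homeomorph.smulOfNeZero (γ m) hγm) '' V) := by
      simp [hWdef, Set.image_image, Homeomorph.smulOfNeZero, Homeomorph.addLeft]
    rw [hWeq]
    exact (Homeomorph.isOpen_image _).mpr ((Homeomorph.isOpen_image _).mpr isOpen_interior)
  have hWsub : W ⊆ rvSupport P (fun ω => Z ω + Y m ω) := by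
    rintro _ ⟨x, hxV, rfl⟩
    intro U hUopen hxU
    -- γ m • x is in the support of Y m
    have hYx : (γ m • x) ∈ rvSupport P (Y m) := by
      intro v hvopen hxv
      have hpre : IsOpen ((fun y : EuclideanSpace ℝ (Fin d) => γ m • y) ⁻¹' v) :=
        hvopen.preimage (continuous_id.const_smul (γ m))
      have := (interior_subset hxV) _ hpre hxv
      exact this
    -- find a product neighborhood
    have hUmem : (fun p : EuclideanSpace ℝ (Fin d) × EuclideanSpace ℝ (Fin d) => p.1 + p.2) ⁻¹' U ∈ 𝓝 (z₀, γ m • x) := by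
      apply continuous_add.continuousAt.preimage_mem_nhds
      exact hUopen.mem_nhds hxU
    obtain ⟨u, v, huopen, hz₀u, hvopen, hxv, huv⟩ := mem_nhds_prod_iff'.mp hUmem
    have hsub : Z ⁻¹' u ∩ (Y m) ⁻¹' v ⊆ (fun ω => Z ω + Y m ω) ⁻¹' U := by
      rintro ω ⟨hu, hv⟩
      exact huv (Set.mk_mem_prod hu hv)
    have hmul : P (Z ⁻¹' u ∩ (Y m) ⁻¹' v) = P (Z ⁻¹' u) * P ((Y m) ⁻¹' v) :=
      hindepZY.measure_inter_preimage_eq_mul u v huopen.measurableSet hvopen.measurableSet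
    have hpos : 0 < P (Z ⁻¹' u ∩ (Y m) ⁻¹' v) := by
      rw [hmul]
      exact ENNReal.mul_pos (hz₀ u huopen hz₀u).ne' (hYx v hvopen hxv).ne'
    exact hpos.trans_le (measure_mono hsub)
  exact ⟨z₀ + γ m • x₀, (interior_maximal hWsub hWopen) ⟨x₀, hx₀, rfl⟩⟩
end

section
/- Let d ∈ ℕ, 𝔠 ∈ (0,∞), let 𝔩(θ,ϑ) = (𝔠/2)‖θ − ϑ‖² for θ,ϑ ∈ ℝ^d, let (Ω,𝓕,ℙ) be a probability space, let X_{n,m} : Ω → ℝ^d, n, m ∈ ℤ, be i.i.d. random variables with sup_{n,m∈ℤ} ‖X_{n,m}(ω)‖ < ∞ for every ω ∈ Ω, let M ∈ ℕ, γ ∈ (0, 2/𝔠), let Θ : ℕ₀ × Ω → ℝ^d satisfy Θ_n = Θ_{n−1} − (γ/M) Σ_{m=1}^M (∇_θ 𝔩)(Θ_{n−1}, X_{n,m}) for all n ∈ ℕ, and let κ ∈ ℤ satisfy Θ₀ = Σ_{n=0}^∞ (𝔠γ(1−𝔠γ)^n/M) Σ_{m=κ+1}^{κ+M} X_{−n,m}.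 Then sup_{n∈ℕ₀} ‖Θ_n‖ ≤ (2/(2−𝔠γ)) sup_{v,w∈ℤ} ‖X_{v,w}‖. -/
open MeasureTheory ProbabilityTheory

/-- **A priori bounds for stationary SGD processes.** Let `𝔩(θ,ϑ) = (𝔠/2)‖θ−ϑ‖²`, let
`X_{n,m} : Ω → ℝ^d`, `n, m ∈ ℤ`, be i.i.d. random variables on a probability space with
`sup_{n,m∈ℤ}‖X_{n,m}(ω)‖ < ∞` for every `ω`, let `M ∈ ℕ`, `γ ∈ (0, 2/𝔠)`, let
`Θ : ℕ₀ × Ω → ℝ^d` satisfy the SGD recursion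
`Θ_n = Θ_{n−1} − (γ/M) Σ_{m=1}^M (∇_θ 𝔩)(Θ_{n−1}, X_{n,m})` (with
`(∇_θ 𝔩)(θ,x) = 𝔠(θ−x)`), and let `κ ∈ ℤ` satisfy
`Θ₀ = Σ_{n=0}^∞ (𝔠γ(1−𝔠γ)^n/M) Σ_{m=κ+1}^{κ+M} X_{−n,m}`. Then
`sup_{n∈ℕ₀} ‖Θ_n‖ ≤ (2/(2−𝔠γ)) sup_{v,w∈ℤ} ‖X_{v,w}‖`. -/
theorem stmt_19 {Ω : Type*} [MeasurableSpace Ω] (P : Measure Ω) [IsProbabilityMeasure P]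
    (d : ℕ) (hd : 0 < d) (c : ℝ) (hc : 0 < c)
    (X : ℤ × ℤ → Ω → EuclideanSpace ℝ (Fin d))
    (hmeas : ∀ p, Measurable (X p))
    (hindep : iIndepFun X P)
    (hident : ∀ p q : ℤ × ℤ, IdentDistrib (X p) (X q) P P)
    (hbdd : ∀ ω, ∃ C : ℝ, ∀ p : ℤ × ℤ, ‖X p ω‖ ≤ C)
    (M : ℕ) (hM : 0 < M) (γ : ℝ) (hγ : γ ∈ Set.Ioo (0 : ℝ) (2 / c))
    (Θ : ℕ → Ω → EuclideanSpace ℝ (Fin d))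
    (hrec : ∀ (n : ℕ) ω, Θ (n + 1) ω = Θ n ω -
      (γ / (M : ℝ)) • ∑ m ∈ Finset.range M, c • (Θ n ω - X ((n : ℤ) + 1, (m : ℤ) + 1) ω))
    (κ : ℤ)
    (hΘ0 : ∀ ω, HasSum
      (fun n : ℕ => ((c * γ * (1 - c * γ) ^ n) / (M : ℝ)) •
        ∑ m ∈ Finset.range M, X (-(n : ℤ), κ + (m : ℤ) + 1) ω)
      (Θ 0 ω)) :
    ∀ (n : ℕ) ω, ‖Θ n ω‖ ≤
      (2 / (2 - c * γ)) * sSup {r : ℝ | ∃ v w : ℤ, r = ‖X (v, w) ω‖} := by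

  intro n ω
  set S := sSup {r : ℝ | ∃ v w : ℤ, r = ‖X (v, w) ω‖} with hS
  obtain ⟨C, hC⟩ := hbdd ω
  have hbddA : BddAbove {r : ℝ | ∃ v w : ℤ, r = ‖X (v, w) ω‖} :=
    ⟨C, fun r hr => by obtain ⟨v, w, rfl⟩ := hr; exact hC (v, w)⟩
  have hle : ∀ v w : ℤ, ‖X (v, w) ω‖ ≤ S := fun v w => le_csSup hbddA ⟨v, w, rfl⟩
  have hS0 : (0 : ℝ) ≤ S := le_trans (norm_nonneg _) (hle 0 0)
  have hM0 : (M : ℝ) ≠ 0 := Nat.cast_ne_zero.mpr hM.ne'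
  have hMpos : (0 : ℝ) < M := Nat.cast_pos.mpr hM
  set a := c * γ with ha
  have ha0 : 0 < a := mul_pos hc hγ.1
  have ha2 : a < 2 := by
    have h := hγ.2
    rw [lt_div_iff₀ hc] at h
    nlinarith
  set r := |1 - a| with hrdef
  have hr0 : (0 : ℝ) ≤ r := abs_nonneg _
  have hr1 : r < 1 := by rw [hrdef, abs_lt]; constructor <;> linarith
  have h2a : (0 : ℝ) < 2 - a := by linarith
  set B := 2 / (2 - a) * S with hB
  have hB2 : (2 - a) * B = 2 * S := by rw [hB]; field_simp
  have hSB : S ≤ B := by nlinarith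
  have hB0 : 0 ≤ B := le_trans hS0 hSB
  have hsumX : ∀ (f : ℕ → ℤ × ℤ), ‖∑ m ∈ Finset.range M, X (f m) ω‖ ≤ (M : ℝ) * S := by
    intro f
    calc ‖∑ m ∈ Finset.range M, X (f m) ω‖ ≤ ∑ m ∈ Finset.range M, ‖X (f m) ω‖ :=
          norm_sum_le _ _
      _ ≤ ∑ _m ∈ Finset.range M, S :=
          Finset.sum_le_sum fun i _ => by simpa using hle (f i).1 (f i).2
      _ = (M : ℝ) * S := by simp [mul_comm]
  have hbase : ‖Θ 0 ω‖ ≤ B := by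
    have hf := hΘ0 ω
    have hfb : ∀ k : ℕ, ‖((c * γ * (1 - c * γ) ^ k) / (M : ℝ)) •
        ∑ m ∈ Finset.range M, X (-(k : ℤ), κ + (m : ℤ) + 1) ω‖ ≤ a * S * r ^ k := by
      intro k
      rw [norm_smul, Real.norm_eq_abs]
      have habs : |((c * γ * (1 - c * γ) ^ k) / (M : ℝ))| = a * r ^ k / M := by
        rw [abs_div, abs_mul, abs_pow, Nat.abs_cast, abs_of_pos (mul_pos hc hγ.1), ← ha, ← hrdef]
      rw [habs]
      calc a * r ^ k / M * ‖∑ m ∈ Finset.range M, X (-(k : ℤ), κ + (m : ℤ) + 1) ω‖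
          ≤ a * r ^ k / M * ((M : ℝ) * S) := by
            apply mul_le_mul_of_nonneg_left (hsumX fun m => (-(k : ℤ), κ + (m : ℤ) + 1))
            positivity
        _ = a * S * r ^ k := by field_simp
    have hg : HasSum (fun k : ℕ => a * S * r ^ k) (a * S * (1 - r)⁻¹) :=
      (hasSum_geometric_of_lt_one hr0 hr1).mul_left (a * S)
    have hsn : Summable fun k : ℕ => ‖((c * γ * (1 - c * γ) ^ k) / (M : ℝ)) •
        ∑ m ∈ Finset.range M, X (-(k : ℤ), κ + (m : ℤ) + 1) ω‖ :=
      Summable.of_nonneg_of_le (fun _ => norm_nonneg _) hfb hg.summable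
    have h1 : ‖Θ 0 ω‖ ≤ ∑' k : ℕ, ‖((c * γ * (1 - c * γ) ^ k) / (M : ℝ)) •
        ∑ m ∈ Finset.range M, X (-(k : ℤ), κ + (m : ℤ) + 1) ω‖ := by
      rw [← hf.tsum_eq]
      exact norm_tsum_le_tsum_norm hsn
    have h2 : (∑' k : ℕ, ‖((c * γ * (1 - c * γ) ^ k) / (M : ℝ)) •
        ∑ m ∈ Finset.range M, X (-(k : ℤ), κ + (m : ℤ) + 1) ω‖) ≤ a * S * (1 - r)⁻¹ := by
      rw [← hg.tsum_eq]
      exact Summable.tsum_le_tsum hfb hsn hg.summable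
    have h3 : a * S * (1 - r)⁻¹ ≤ B := by
      rcases le_or_gt a 1 with h | h
      · have hra : r = 1 - a := abs_of_nonneg (by linarith)
        have : a * S * (1 - r)⁻¹ = S := by
          rw [hra, show (1 - (1 - a)) = a by ring]
          field_simp
        rw [this]; exact hSB
      · have hra : r = a - 1 := by rw [hrdef, abs_of_neg (by linarith)]; ring
        have h1r : 1 - r = 2 - a := by rw [hra]; ring
        rw [h1r]
        have : a * S * (2 - a)⁻¹ ≤ 2 * S * (2 - a)⁻¹ := by
          apply mul_le_mul_of_nonneg_right _ (inv_nonneg.mpr h2a.le)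
          nlinarith
        calc a * S * (2 - a)⁻¹ ≤ 2 * S * (2 - a)⁻¹ := this
          _ = B := by rw [hB]; ring
    exact h1.trans (h2.trans h3)
  have hstep : ∀ k : ℕ, ‖Θ k ω‖ ≤ B → ‖Θ (k + 1) ω‖ ≤ B := by
    intro k hk
    have heq : Θ (k + 1) ω = (1 - a) • Θ k ω +
        (a / M) • ∑ m ∈ Finset.range M, X ((k : ℤ) + 1, (m : ℤ) + 1) ω := by
      rw [hrec k ω]
      have hsum : ∑ m ∈ Finset.range M, c • (Θ k ω - X ((k : ℤ) + 1, (m : ℤ) + 1) ω)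
          = (c * M) • Θ k ω - c • ∑ m ∈ Finset.range M, X ((k : ℤ) + 1, (m : ℤ) + 1) ω := by
        rw [← Finset.smul_sum, Finset.sum_sub_distrib, Finset.sum_const, Finset.card_range,
          smul_sub]
        congr 1
        module
      rw [hsum]
      match_scalars <;> field_simp <;> ring
    rw [heq]
    have hadM : (0 : ℝ) ≤ a / M := by positivity
    calc ‖(1 - a) • Θ k ω + (a / M) • ∑ m ∈ Finset.range M, X ((k : ℤ) + 1, (m : ℤ) + 1) ω‖
        ≤ ‖(1 - a) • Θ k ω‖ + ‖(a / M) • ∑ m ∈ Finset.range M, X ((k : ℤ) + 1, (m : ℤ) + 1) ω‖ :=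
          norm_add_le _ _
      _ = r * ‖Θ k ω‖ + (a / M) * ‖∑ m ∈ Finset.range M, X ((k : ℤ) + 1, (m : ℤ) + 1) ω‖ := by
          rw [norm_smul, norm_smul, Real.norm_eq_abs, Real.norm_eq_abs, hrdef,
            abs_of_nonneg hadM]
      _ ≤ r * B + (a / M) * ((M : ℝ) * S) := by
          gcongr
          exact hsumX fun m => ((k : ℤ) + 1, (m : ℤ) + 1)
      _ = r * B + a * S := by field_simp
      _ ≤ B := by
          rcases le_or_gt a 1 with h | h
          · have hra : r = 1 - a := abs_of_nonneg (by linarith)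
            nlinarith [mul_le_mul_of_nonneg_left hSB ha0.le]
          · have hra : r = a - 1 := by rw [hrdef, abs_of_neg (by linarith)]; ring
            nlinarith
  induction n with
  | zero => exact hbase
  | succ k ih => exact hstep k ih
end
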